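/- arXiv:2202.02561 — 6 statements merged into one kernel-verified Lean document; each statement's English description precedes it below -/
import Mathlib

section
/- Assume (A). Then λ u_λ(x̄) = f̲ for every x̄ ∈ 𝔐 and every λ > 0, and for all x ∈ ℝⁿ and λ > 0 one has |λ u_λ(x) − f̲| ≤ λ √(4‖f‖∞) · dist(x,𝔐); consequently λ u_λ(x) → f̲ locally uniformly on ℝⁿ as λ → 0⁺. -/
open MeasureTheory Filter Metric Set Topology

noncomputable section

/-- `n`-dimensional Euclidean space. -/
abbrev Euc (n : ℕ) := EuclideanSpace ℝ (Fin n)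

variable {n : ℕ}

/-- Trajectory of the control system `ẏ = α`, `y 0 = x`. -/
def traj (x : Euc n) (α : ℝ → Euc n) (t : ℝ) : Euc n :=
  x + ∫ s in Set.Ioc (0 : ℝ) t, α s

/-- The sup norm `‖f‖∞ = sup_x |f x|`. -/
def supNorm (f : Euc n → ℝ) : ℝ := ⨆ x, |f x|

/-- Running cost of the infinite-horizon discounted control problem. -/
def dCost (f : Euc n → ℝ) (lam : ℝ) (x : Euc n) (α : ℝ → Euc n) (t : ℝ) : ℝ :=
  ((1 / 2) * ‖α t‖ ^ 2 + f (traj x α t)) * Real.exp (-(lam * t))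

/-- Value function `u_λ` of the infinite-horizon discounted control problem:
the infimum of the total discounted cost over measurable controls (with finite cost). -/
def uLam (f : Euc n → ℝ) (lam : ℝ) (x : Euc n) : ℝ :=
  sInf {c : ℝ | ∃ α : ℝ → Euc n, Measurable α ∧
    IntegrableOn (dCost f lam x α) (Set.Ioi 0) volume ∧
    c = ∫ t in Set.Ioi (0 : ℝ), dCost f lam x α t}

/-- Running cost of the finite-horizon control problem. -/
def fCost (f : Euc n → ℝ) (x : Euc n) (α : ℝ → Euc n) (s : ℝ) : ℝ :=
  (1 / 2) * ‖α s‖ ^ 2 + f (traj x α s)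

/-- Value function `u(x,t)` of the finite-horizon control problem. -/
def uT (f : Euc n → ℝ) (x : Euc n) (t : ℝ) : ℝ :=
  sInf {c : ℝ | ∃ α : ℝ → Euc n, Measurable α ∧
    IntegrableOn (fCost f x α) (Set.Ioc 0 t) volume ∧
    c = ∫ s in Set.Ioc (0 : ℝ) t, fCost f x α s}

end

noncomputable section
variable {n : ℕ}

lemma expInt {lam : ℝ} (hl : 0 < lam) (a : ℝ) :
    IntegrableOn (fun t : ℝ => Real.exp (-(lam * t))) (Set.Ioi a) := by
  simpa [neg_mul] using exp_neg_integrableOn_Ioi a hl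

lemma expVal {lam : ℝ} (hl : 0 < lam) (a : ℝ) :
    ∫ t in Set.Ioi a, Real.exp (-(lam * t)) = Real.exp (-(lam * a)) / lam := by
  have hderiv : ∀ x ∈ Set.Ici a, HasDerivAt (fun t => -Real.exp (-(lam * t)) / lam)
      (Real.exp (-(lam * x))) x := by
    intro x _
    have h1 : HasDerivAt (fun t : ℝ => -(lam * t)) (-lam) x := by
      have h := ((hasDerivAt_id x).const_mul lam).neg; rw [mul_one] at h; exact h
    have := (h1.exp.neg.div_const lam)
    refine this.congr_deriv ?_
    field_simp
  have htend : Tendsto (fun t => -Real.exp (-(lam * t)) / lam) atTop (𝓝 (-0/lam)) := by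
    refine Tendsto.div_const (Tendsto.neg ?_) _
    exact Real.tendsto_exp_atBot.comp (by simpa [neg_mul] using tendsto_id.const_mul_atTop_of_neg (neg_neg_iff_pos.2 hl) )
  have := MeasureTheory.integral_Ioi_of_hasDerivAt_of_tendsto' hderiv (expInt hl a) htend
  rw [this]
  field_simp; ring

variable {n : ℕ}

lemma dCost_zero (f : Euc n → ℝ) (lam : ℝ) (x : Euc n) :
    dCost f lam x 0 = fun t => f x * Real.exp (-(lam * t)) := by
  funext t
  simp [dCost, traj]

lemma uLam_set_nonempty (f : Euc n → ℝ) {lam : ℝ} (hl : 0 < lam) (x : Euc n) :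
    f x / lam ∈ {c : ℝ | ∃ α : ℝ → Euc n, Measurable α ∧
      IntegrableOn (dCost f lam x α) (Set.Ioi 0) volume ∧
      c = ∫ t in Set.Ioi (0 : ℝ), dCost f lam x α t} := by
  refine ⟨0, measurable_const, ?_, ?_⟩
  · rw [dCost_zero]
    exact (expInt hl 0).const_mul _
  · rw [dCost_zero]
    rw [MeasureTheory.integral_const_mul, expVal hl 0]
    simp [div_eq_mul_inv]

lemma cost_lower (f : Euc n → ℝ) {flo : ℝ} (hlo : ∀ x, flo ≤ f x)
    {lam : ℝ} (hl : 0 < lam) (x : Euc n) {α : ℝ → Euc n}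
    (hint : IntegrableOn (dCost f lam x α) (Set.Ioi 0) volume) :
    flo / lam ≤ ∫ t in Set.Ioi (0 : ℝ), dCost f lam x α t := by
  have h1 : ∫ t in Set.Ioi (0:ℝ), flo * Real.exp (-(lam * t)) = flo / lam := by
    rw [MeasureTheory.integral_const_mul, expVal hl 0]; simp; ring
  rw [← h1]
  refine MeasureTheory.setIntegral_mono_on ((expInt hl 0).const_mul _) hint measurableSet_Ioi ?_
  intro t _
  unfold dCost
  have h2 : flo ≤ (1/2) * ‖α t‖^2 + f (traj x α t) := by
    have h := hlo (traj x α t)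
    nlinarith [sq_nonneg ‖α t‖]
  exact mul_le_mul_of_nonneg_right (by simpa using h2) (Real.exp_pos _).le

lemma uLam_bddBelow (f : Euc n → ℝ) {flo : ℝ} (hlo : ∀ x, flo ≤ f x)
    {lam : ℝ} (hl : 0 < lam) (x : Euc n) :
    flo / lam ≤ uLam f lam x := by
  refine le_csInf ⟨_, uLam_set_nonempty f hl x⟩ ?_
  rintro c ⟨α, -, hint, rfl⟩
  exact cost_lower f hlo hl x hint

lemma uLam_le (f : Euc n → ℝ) {flo : ℝ} (hlo : ∀ x, flo ≤ f x)
    {lam : ℝ} (hl : 0 < lam) (x : Euc n) :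
    uLam f lam x ≤ f x / lam := by
  refine csInf_le ⟨flo / lam, ?_⟩ (uLam_set_nonempty f hl x)
  rintro c ⟨α, -, hint, rfl⟩
  exact cost_lower f hlo hl x hint

lemma upper_est (f : Euc n → ℝ) {flo : ℝ} (hcont : Continuous f)
    (hlo : ∀ x, flo ≤ f x) (hbd : ∀ x, |f x| ≤ supNorm f)
    {lam : ℝ} (hl : 0 < lam) (x z : Euc n) (hz : f z = flo) {T : ℝ} (hT : 0 < T) :
    uLam f lam x ≤ flo / lam + (‖z - x‖^2 / (2*T) + 2 * supNorm f * T) := by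
  set v : Euc n := T⁻¹ • (z - x) with hv
  set α : ℝ → Euc n := (Set.Ioc (0:ℝ) T).indicator (fun _ => v) with hα
  have hαmeas : Measurable α :=
    Measurable.indicator measurable_const measurableSet_Ioc
  -- trajectory on (0, T]
  have htraj1 : ∀ t ∈ Set.Ioc (0:ℝ) T, traj x α t = x + (t/T) • (z - x) := by
    intro t ht
    have hsub : Set.Ioc (0:ℝ) T ∩ Set.Ioc (0:ℝ) t = Set.Ioc (0:ℝ) t := by
      rw [Set.inter_eq_right]
      exact Set.Ioc_subset_Ioc le_rfl ht.2
    rw [traj, hα, MeasureTheory.integral_indicator measurableSet_Ioc,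
      MeasureTheory.Measure.restrict_restrict measurableSet_Ioc, hsub,
      MeasureTheory.setIntegral_const]
    congr 1
    rw [measureReal_def, Real.volume_Ioc, ENNReal.toReal_ofReal (by linarith [ht.1])]
    rw [hv, smul_smul, sub_zero, div_eq_mul_inv]
  -- trajectory on (T, ∞)
  have htraj2 : ∀ t ∈ Set.Ioi T, traj x α t = z := by
    intro t ht
    have hsub : Set.Ioc (0:ℝ) T ∩ Set.Ioc (0:ℝ) t = Set.Ioc (0:ℝ) T := by
      rw [Set.inter_eq_left]
      exact Set.Ioc_subset_Ioc le_rfl (le_of_lt ht)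
    rw [traj, hα, MeasureTheory.integral_indicator measurableSet_Ioc,
      MeasureTheory.Measure.restrict_restrict measurableSet_Ioc, hsub,
      MeasureTheory.setIntegral_const]
    rw [measureReal_def, Real.volume_Ioc, ENNReal.toReal_ofReal (by linarith), hv, smul_smul, sub_zero]
    rw [mul_inv_cancel₀ (ne_of_gt hT), one_smul]
    abel
  have hα1 : ∀ t ∈ Set.Ioc (0:ℝ) T, α t = v := fun t ht => by
    rw [hα, Set.indicator_of_mem ht]
  have hα2 : ∀ t ∈ Set.Ioi T, α t = 0 := fun t ht => by
    rw [hα, Set.indicator_of_notMem (fun h => absurd h.2 (not_le.2 ht))]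
  -- dCost on the two pieces
  have hd1 : ∀ t ∈ Set.Ioc (0:ℝ) T,
      dCost f lam x α t = ((1/2) * ‖v‖^2 + f (x + (t/T) • (z - x))) * Real.exp (-(lam*t)) := by
    intro t ht; rw [dCost, hα1 t ht, htraj1 t ht]
  have hd2 : ∀ t ∈ Set.Ioi T, dCost f lam x α t = flo * Real.exp (-(lam*t)) := by
    intro t ht; rw [dCost, hα2 t ht, htraj2 t ht, hz]; simp
  -- integrability on each piece
  have hint1 : IntegrableOn (dCost f lam x α) (Set.Ioc 0 T) volume := by
    refine (MeasureTheory.IntegrableOn.congr_fun ?_ (fun t ht => (hd1 t ht).symm)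
      measurableSet_Ioc)
    apply Continuous.integrableOn_Ioc
    have hc1 : Continuous fun t : ℝ => x + (t/T) • (z - x) :=
      continuous_const.add ((continuous_id.div_const T).smul continuous_const)
    exact (continuous_const.add (hcont.comp hc1)).mul
      (Real.continuous_exp.comp (continuous_const.mul continuous_id).neg)
  have hint2 : IntegrableOn (dCost f lam x α) (Set.Ioi T) volume := by
    refine (MeasureTheory.IntegrableOn.congr_fun ?_ (fun t ht => (hd2 t ht).symm)
      measurableSet_Ioi)
    exact (expInt hl T).const_mul _
  have hunion : Set.Ioc (0:ℝ) T ∪ Set.Ioi T = Set.Ioi 0 := Set.Ioc_union_Ioi_eq_Ioi (le_of_lt hT)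
  have hint : IntegrableOn (dCost f lam x α) (Set.Ioi 0) volume := by
    rw [← hunion]; exact hint1.union hint2
  -- uLam ≤ total cost
  have hmem : (∫ t in Set.Ioi (0:ℝ), dCost f lam x α t) ∈ {c : ℝ | ∃ α : ℝ → Euc n, Measurable α ∧
      IntegrableOn (dCost f lam x α) (Set.Ioi 0) volume ∧
      c = ∫ t in Set.Ioi (0 : ℝ), dCost f lam x α t} := ⟨α, hαmeas, hint, rfl⟩
  have hbdd : BddBelow {c : ℝ | ∃ α : ℝ → Euc n, Measurable α ∧
      IntegrableOn (dCost f lam x α) (Set.Ioi 0) volume ∧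
      c = ∫ t in Set.Ioi (0 : ℝ), dCost f lam x α t} := by
    refine ⟨flo / lam, ?_⟩
    rintro c ⟨β, -, hintβ, rfl⟩
    exact cost_lower f hlo hl x hintβ
  refine le_trans (csInf_le hbdd hmem) ?_
  -- split the integral
  rw [← hunion, MeasureTheory.setIntegral_union (Set.Ioc_disjoint_Ioi le_rfl)
    measurableSet_Ioi hint1 hint2]
  have hI2 : ∫ t in Set.Ioi T, dCost f lam x α t = flo * (Real.exp (-(lam*T)) / lam) := by
    rw [MeasureTheory.setIntegral_congr_fun measurableSet_Ioi hd2,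
      MeasureTheory.integral_const_mul, expVal hl T]
  -- bound the first integral
  have hs0 : 0 ≤ supNorm f := le_trans (abs_nonneg _) (hbd x)
  have hnv : ‖v‖^2 = ‖z - x‖^2 / T^2 := by
    rw [hv, norm_smul, mul_pow, norm_inv, Real.norm_eq_abs, abs_of_pos hT]
    field_simp
  have hI1 : ∫ t in Set.Ioc (0:ℝ) T, dCost f lam x α t ≤
      ((1/2) * ‖v‖^2 + 2 * supNorm f) * T + flo * ((1 - Real.exp (-(lam*T))) / lam) := by
    have hb : ∀ t ∈ Set.Ioc (0:ℝ) T, dCost f lam x α t ≤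
        ((1/2) * ‖v‖^2 + 2 * supNorm f) + flo * Real.exp (-(lam*t)) := by
      intro t ht
      rw [hd1 t ht]
      set y := x + (t/T) • (z - x)
      have h1 : f y - flo ≤ 2 * supNorm f := by
        have := hbd y
        have h2 : -flo ≤ supNorm f := by
          obtain ⟨w, hw⟩ : ∃ w, f w = flo := ⟨z, hz⟩
          have := hbd w; rw [hw] at this
          cases abs_le.1 this; linarith
        cases abs_le.1 (hbd y); linarith
      have he1 : Real.exp (-(lam*t)) ≤ 1 := by
        apply Real.exp_le_one_iff.2; nlinarith [ht.1]
      have he0 : (0:ℝ) < Real.exp (-(lam*t)) := Real.exp_pos _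
      nlinarith [sq_nonneg ‖v‖, hlo y]
    calc ∫ t in Set.Ioc (0:ℝ) T, dCost f lam x α t
        ≤ ∫ t in Set.Ioc (0:ℝ) T, (((1/2) * ‖v‖^2 + 2 * supNorm f) + flo * Real.exp (-(lam*t))) := by
          refine MeasureTheory.setIntegral_mono_on hint1 ?_ measurableSet_Ioc hb
          exact (integrable_const _).add (MeasureTheory.IntegrableOn.mono_set
            ((expInt hl 0).const_mul flo) Set.Ioc_subset_Ioi_self)
      _ = ((1/2) * ‖v‖^2 + 2 * supNorm f) * T + flo * ((1 - Real.exp (-(lam*T))) / lam) := by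
          rw [MeasureTheory.integral_add (integrable_const _)
            (MeasureTheory.IntegrableOn.mono_set ((expInt hl 0).const_mul flo) Set.Ioc_subset_Ioi_self)]
          rw [MeasureTheory.setIntegral_const, MeasureTheory.integral_const_mul]
          have : ∫ t in Set.Ioc (0:ℝ) T, Real.exp (-(lam*t)) = (1 - Real.exp (-(lam*T))) / lam := by
            have h1 : ∫ t in Set.Ioi (0:ℝ), Real.exp (-(lam*t)) = 1/lam := by
              rw [expVal hl 0]; simp
            have h2 : ∫ t in Set.Ioi T, Real.exp (-(lam*t)) = Real.exp (-(lam*T))/lam :=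
              expVal hl T
            have h3 := MeasureTheory.setIntegral_union (f := fun t => Real.exp (-(lam*t)))
              (μ := volume) (Set.Ioc_disjoint_Ioi (le_refl T)) measurableSet_Ioi
              ((expInt hl 0).mono_set Set.Ioc_subset_Ioi_self) (expInt hl T)
            rw [hunion, h1, h2] at h3
            field_simp at h3 ⊢
            linarith
          rw [this]
          rw [measureReal_def, Real.volume_Ioc, ENNReal.toReal_ofReal (by linarith), sub_zero, smul_eq_mul,
            mul_comm]
  have hfin : ((1/2) * ‖v‖^2 + 2 * supNorm f) * T = (1/2) * (‖z-x‖^2/T^2) * T + 2 * supNorm f * T := by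
    rw [hnv]; ring
  calc (∫ t in Set.Ioc (0:ℝ) T, dCost f lam x α t) + ∫ t in Set.Ioi T, dCost f lam x α t
      ≤ ((1/2) * ‖v‖^2 + 2 * supNorm f) * T + flo * ((1 - Real.exp (-(lam*T))) / lam)
        + flo * (Real.exp (-(lam*T)) / lam) := by rw [hI2]; linarith [hI1]
    _ = flo / lam + (‖z - x‖^2 / (2*T) + 2 * supNorm f * T) := by
        rw [hfin]; field_simp; ring


lemma choose_T {s d' ε : ℝ} (hs : 0 < s) (hd' : 0 ≤ d') (hε : 0 < ε) :
    ∃ T, 0 < T ∧ d'^2/(2*T) + 2*s*T ≤ d' * Real.sqrt (4*s) + ε := by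
  set K := Real.sqrt (4*s) with hKdef
  have hK : 0 < K := Real.sqrt_pos.2 (by linarith)
  have hK2 : K^2 = 4*s := Real.sq_sqrt (by linarith)
  refine ⟨(d' + ε/K)/K, by positivity, ?_⟩
  set T := (d' + ε/K)/K with hTdef
  have hT : 0 < T := by positivity
  have hTK : T * K = d' + ε/K := by rw [hTdef]; exact div_mul_cancel₀ _ (ne_of_gt hK)
  have h1 : d'^2/(2*T) ≤ d'*K/2 := by
    rw [div_le_iff₀ (by positivity)]
    have hδ : 0 < ε / K := div_pos hε hK
    have h5 : d' ≤ T * K := by rw [hTK]; linarith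
    nlinarith
  have h2 : 2*s*T = (d'*K + ε)/2 := by
    have h4 : K * (ε / K) = ε := by field_simp
    linear_combination (K/2) * hTK + (1/2) * h4 - (T/2) * hK2
  linarith

lemma supNorm_bd (f : Euc n → ℝ) {flo fhi : ℝ} (hlo : ∀ x, flo ≤ f x) (hhi : ∀ x, f x ≤ fhi)
    (x : Euc n) : |f x| ≤ supNorm f := by
  refine le_ciSup (f := fun y => |f y|) ⟨max |flo| |fhi|, ?_⟩ x
  rintro _ ⟨y, rfl⟩
  rw [abs_le]
  constructor
  · calc -(max |flo| |fhi|) ≤ -|flo| := by simp [le_max_left]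
      _ ≤ flo := neg_abs_le flo
      _ ≤ f y := hlo y
  · calc f y ≤ fhi := hhi y
      _ ≤ |fhi| := le_abs_self fhi
      _ ≤ max |flo| |fhi| := le_max_right _ _


end

/-- under assumptions (A), `lam * u_lam = flo` on the argmin set,
`|lam * u_lam x - flo| ≤ lam √(4‖f‖∞) dist(x, 𝔐)`, and `lam * u_lam → flo`
locally uniformly as `lam → 0⁺`. -/
theorem stmt1 {n : ℕ} (f : Euc n → ℝ) (flo fhi : ℝ)
    (hcont : Continuous f) (hlo : ∀ x, flo ≤ f x) (hhi : ∀ x, f x ≤ fhi)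
    (hattain : ∃ x, f x = flo) :
    (∀ lam : ℝ, 0 < lam → ∀ x ∈ {z : Euc n | f z = flo}, lam * uLam f lam x = flo) ∧
    (∀ lam : ℝ, 0 < lam → ∀ x : Euc n,
      |lam * uLam f lam x - flo| ≤
        lam * Real.sqrt (4 * supNorm f) * Metric.infDist x {z : Euc n | f z = flo}) ∧
    TendstoLocallyUniformly (fun (lam : ℝ) (x : Euc n) => lam * uLam f lam x)
      (fun _ => flo) (𝓝[>] (0 : ℝ)) := by
  have hne : ({z : Euc n | f z = flo}).Nonempty := hattain
  have hbd : ∀ x, |f x| ≤ supNorm f := supNorm_bd f hlo hhi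
  have hs0 : 0 ≤ supNorm f := le_trans (abs_nonneg _) (hbd 0)
  have part1 : ∀ lam : ℝ, 0 < lam → ∀ x ∈ {z : Euc n | f z = flo},
      lam * uLam f lam x = flo := by
    intro lam hl x hx
    rw [Set.mem_setOf_eq] at hx
    have h1 := uLam_bddBelow f hlo hl x
    have h2 := uLam_le f hlo hl x
    rw [hx] at h2
    have h3 : uLam f lam x = flo / lam := le_antisymm h2 h1
    rw [h3]; field_simp
  have part2 : ∀ lam : ℝ, 0 < lam → ∀ x : Euc n,
      |lam * uLam f lam x - flo| ≤
        lam * Real.sqrt (4 * supNorm f) * Metric.infDist x {z : Euc n | f z = flo} := by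
    intro lam hl x
    have hdlow := uLam_bddBelow f hlo hl x
    have hge : flo ≤ lam * uLam f lam x := by
      have h4 : lam * (flo / lam) ≤ lam * uLam f lam x :=
        mul_le_mul_of_nonneg_left hdlow hl.le
      rw [mul_div_cancel₀ _ (ne_of_gt hl)] at h4
      exact h4
    rw [abs_of_nonneg (by linarith)]
    have hdist0 : (0:ℝ) ≤ Metric.infDist x {z : Euc n | f z = flo} := Metric.infDist_nonneg
    rcases eq_or_lt_of_le hs0 with hs | hs
    · -- supNorm f = 0, so f ≡ 0 and flo = 0
      have hf0 : ∀ y, f y = 0 := by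
        intro y
        have := hbd y
        rw [← hs] at this
        exact abs_eq_zero.1 (le_antisymm this (abs_nonneg _))
      have hflo : flo = 0 := by
        obtain ⟨w, hw⟩ := hattain
        rw [← hw, hf0 w]
      have h2 := uLam_le f hlo hl x
      rw [hf0 x] at h2
      have h5 : lam * uLam f lam x ≤ 0 := by
        have := mul_le_mul_of_nonneg_left h2 hl.le
        simpa using this
      have h6 : 0 ≤ lam * Real.sqrt (4 * supNorm f) * Metric.infDist x {z : Euc n | f z = flo} := by
        have := Real.sqrt_nonneg (4 * supNorm f)
        positivity
      subst hflo
      linarith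
    · -- supNorm f > 0
      set K := Real.sqrt (4 * supNorm f) with hKdef
      have hK : 0 < K := Real.sqrt_pos.2 (by linarith)
      set d := Metric.infDist x {z : Euc n | f z = flo} with hddef
      have hu : uLam f lam x ≤ flo / lam + K * d := by
        refine le_of_forall_pos_le_add ?_
        intro ε hε
        have hδ : (0:ℝ) < ε / (2 * (K + 1)) := by positivity
        obtain ⟨z, hzM, hzd⟩ := (Metric.infDist_lt_iff hne).1
          (show Metric.infDist x {z : Euc n | f z = flo} < d + ε / (2 * (K + 1)) by
            rw [← hddef]; linarith)
        obtain ⟨T, hT, hTb⟩ := choose_T (d' := ‖z - x‖) hs (norm_nonneg _) (half_pos hε)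
        have hest := upper_est f hcont hlo hbd hl x z hzM hT
        have h6 : ‖z - x‖ ≤ d + ε / (2 * (K + 1)) := by
          rw [norm_sub_rev, ← dist_eq_norm]
          exact le_of_lt hzd
        have h7 : ‖z - x‖ * K ≤ d * K + ε / 2 := by
          have h8 : ‖z - x‖ * K ≤ (d + ε / (2 * (K + 1))) * K :=
            mul_le_mul_of_nonneg_right h6 hK.le
          have h9 : (ε / (2 * (K + 1))) * K ≤ ε / 2 := by
            rw [div_mul_eq_mul_div, div_le_div_iff₀ (by positivity) (by positivity)]
            nlinarith
          nlinarith
        calc uLam f lam x ≤ flo / lam + (‖z - x‖^2 / (2*T) + 2 * supNorm f * T) := hest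
          _ ≤ flo / lam + (‖z - x‖ * K + ε/2) := by
              have := hTb; rw [← hKdef] at this; linarith
          _ ≤ flo / lam + K * d + ε := by rw [mul_comm K d]; linarith
      have h10 : lam * uLam f lam x ≤ flo + lam * (K * d) := by
        have := mul_le_mul_of_nonneg_left hu hl.le
        rw [mul_add, mul_div_cancel₀ _ (ne_of_gt hl)] at this
        exact this
      calc lam * uLam f lam x - flo ≤ lam * (K * d) := by linarith
        _ = lam * K * d := by ring
  refine ⟨part1, part2, ?_⟩
  rw [tendstoLocallyUniformly_iff_forall_isCompact]
  intro S hS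
  rcases S.eq_empty_or_nonempty with rfl | ⟨x₀, hx₀⟩
  · intro u hu; simp
  obtain ⟨R, hR⟩ : ∃ R, ∀ x ∈ S, dist x x₀ ≤ R := by
    obtain ⟨R, hR⟩ := (hS.isBounded).subset_closedBall x₀
    exact ⟨R, fun x hx => hR hx⟩
  have hR0 : 0 ≤ R := le_trans dist_nonneg (hR x₀ hx₀)
  set C := Real.sqrt (4 * supNorm f) * (Metric.infDist x₀ {z : Euc n | f z = flo} + R)
    with hCdef
  have hC0 : 0 ≤ C := by
    have h1 : (0:ℝ) ≤ Metric.infDist x₀ {z : Euc n | f z = flo} := Metric.infDist_nonneg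
    have h2 := Real.sqrt_nonneg (4 * supNorm f)
    positivity
  rw [Metric.tendstoUniformlyOn_iff]
  intro ε hε
  have hmem : Set.Ioo (0:ℝ) (ε/(C+1)) ∈ 𝓝[>] (0:ℝ) :=
    Ioo_mem_nhdsGT_of_mem (Set.mem_Ico.2 ⟨le_refl (0:ℝ), by positivity⟩)
  filter_upwards [hmem] with lam hlam x hx
  obtain ⟨hl0, hlu⟩ := hlam
  have h2 := part2 lam hl0 x
  have hdx : Metric.infDist x {z : Euc n | f z = flo} ≤
      Metric.infDist x₀ {z : Euc n | f z = flo} + R :=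
    le_trans (Metric.infDist_le_infDist_add_dist (y := x₀)) (by linarith [hR x hx])
  have h3 : lam * Real.sqrt (4 * supNorm f) * Metric.infDist x {z : Euc n | f z = flo}
      ≤ lam * C := by
    rw [hCdef, ← mul_assoc]
    exact mul_le_mul_of_nonneg_left hdx (by positivity)
  have h4 : lam * C < ε := by
    have h5 : lam * (C + 1) < ε :=
      (lt_div_iff₀ (by positivity : (0:ℝ) < C + 1)).1 hlu
    nlinarith
  rw [Real.dist_eq, abs_sub_comm]
  calc |lam * uLam f lam x - flo| ≤ _ := h2
    _ < ε := lt_of_le_of_lt h3 h4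
end

section
/- Assume (A) and (B). Then for every λ > 0 the function u_λ is C̃₃-semiconcave with C̃₃ := √(2(C₁ + C₂) + 1), i.e. u_λ(x+h) + u_λ(x−h) − 2u_λ(x) ≤ C̃₃ |h|² for all x, h ∈ ℝⁿ; in particular the semiconcavity constant is independent of λ. -/
open MeasureTheory Filter Metric Set Topology

noncomputable section
variable {n : ℕ}

def costSet (f : Euc n → ℝ) (lam : ℝ) (z : Euc n) : Set ℝ :=
  {c : ℝ | ∃ α : ℝ → Euc n, Measurable α ∧
    IntegrableOn (dCost f lam z α) (Set.Ioi 0) volume ∧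
    c = ∫ t in Set.Ioi (0 : ℝ), dCost f lam z α t}

lemma uLam_eq (f : Euc n → ℝ) (lam : ℝ) (z : Euc n) : uLam f lam z = sInf (costSet f lam z) := rfl

lemma exp_intOn (lam : ℝ) (hlam : 0 < lam) :
    IntegrableOn (fun t => Real.exp (-(lam * t))) (Set.Ioi (0:ℝ)) volume := by
  simpa [neg_mul] using exp_neg_integrableOn_Ioi 0 hlam

lemma costSet_nonempty (f : Euc n → ℝ) (lam : ℝ) (hlam : 0 < lam) (z : Euc n) :
    (costSet f lam z).Nonempty := by
  refine ⟨_, fun _ => 0, measurable_const, ?_, rfl⟩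
  have h1 : dCost f lam z (fun _ => 0) = fun t => f z * Real.exp (-(lam * t)) := by
    funext t
    simp [dCost, traj]
  rw [h1]
  exact (exp_intOn lam hlam).const_mul _

lemma costSet_bddBelow (f : Euc n → ℝ) (flo lam : ℝ) (hlo : ∀ x, flo ≤ f x) (hlam : 0 < lam)
    (z : Euc n) : BddBelow (costSet f lam z) := by
  refine ⟨∫ t in Set.Ioi (0:ℝ), flo * Real.exp (-(lam * t)), ?_⟩
  rintro c ⟨α, hα, hI, rfl⟩
  refine setIntegral_mono_on ((exp_intOn lam hlam).const_mul _) hI measurableSet_Ioi ?_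
  intro t ht
  have h2 : flo ≤ (1/2) * ‖α t‖ ^ 2 + f (traj z α t) := by
    nlinarith [hlo (traj z α t), sq_nonneg ‖α t‖]
  simp only [dCost]
  exact mul_le_mul_of_nonneg_right h2 (Real.exp_pos _).le

end

noncomputable section
variable {n : ℕ}

lemma alpha_sq_intOn (f : Euc n → ℝ) (flo : ℝ) (hlo : ∀ x, flo ≤ f x) (lam : ℝ) (hlam : 0 < lam)
    (z : Euc n) (α : ℝ → Euc n) (hα : Measurable α)
    (hI : IntegrableOn (dCost f lam z α) (Set.Ioi 0) volume) (b : ℝ) (hb : 0 < b) :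
    IntegrableOn (fun t => ‖α t‖ ^ 2) (Set.Ioc 0 b) volume := by
  have hIb : IntegrableOn (dCost f lam z α) (Set.Ioc 0 b) volume :=
    hI.mono_set Set.Ioc_subset_Ioi_self
  have hg : IntegrableOn (fun t => 2 * (|dCost f lam z α t| * Real.exp (lam * b) + |flo|))
      (Set.Ioc 0 b) volume := by
    apply Integrable.const_mul
    exact (hIb.abs.mul_const _).add (integrableOn_const measure_Ioc_lt_top.ne)
  refine Integrable.mono' hg ((hα.norm.pow_const 2).aestronglyMeasurable) ?_
  refine (ae_restrict_iff' measurableSet_Ioc).2 (ae_of_all _ ?_)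
  intro t ht
  have key : dCost f lam z α t * Real.exp (lam * t) = (1/2) * ‖α t‖ ^ 2 + f (traj z α t) := by
    simp only [dCost]
    rw [mul_assoc, ← Real.exp_add]; simp
  have h1 : Real.exp (lam * t) ≤ Real.exp (lam * b) :=
    Real.exp_le_exp.2 (by nlinarith [ht.2, hlam.le, ht.1])
  have h2 : dCost f lam z α t * Real.exp (lam * t) ≤ |dCost f lam z α t| * Real.exp (lam * b) :=
    calc dCost f lam z α t * Real.exp (lam * t) ≤ |dCost f lam z α t| * Real.exp (lam * t) :=
          mul_le_mul_of_nonneg_right (le_abs_self _) (Real.exp_pos _).le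
      _ ≤ _ := mul_le_mul_of_nonneg_left h1 (abs_nonneg _)
  have h3 := hlo (traj z α t)
  have h4 : ‖(fun t => ‖α t‖ ^ 2) t‖ = ‖α t‖ ^ 2 := by
    rw [Real.norm_eq_abs, abs_of_nonneg]; positivity
  rw [h4]
  nlinarith [neg_abs_le flo]

lemma alpha_intOn (f : Euc n → ℝ) (flo : ℝ) (hlo : ∀ x, flo ≤ f x) (lam : ℝ) (hlam : 0 < lam)
    (z : Euc n) (α : ℝ → Euc n) (hα : Measurable α)
    (hI : IntegrableOn (dCost f lam z α) (Set.Ioi 0) volume) (b : ℝ) (hb : 0 < b) :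
    IntegrableOn α (Set.Ioc 0 b) volume := by
  have hsq := alpha_sq_intOn f flo hlo lam hlam z α hα hI b hb
  have hg : IntegrableOn (fun t => 1 + ‖α t‖ ^ 2) (Set.Ioc 0 b) volume :=
    (integrableOn_const measure_Ioc_lt_top.ne).add hsq
  refine Integrable.mono' hg hα.aestronglyMeasurable (ae_of_all _ ?_)
  intro t
  nlinarith [sq_nonneg (‖α t‖ - 1), norm_nonneg (α t)]

lemma traj_shift (z : Euc n) (α : ℝ → Euc n)
    (hα : ∀ b, 0 < b → IntegrableOn α (Set.Ioc 0 b) volume)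
    (T : ℝ) (hT : 0 < T) (u : Euc n) (t : ℝ) (ht : 0 < t) :
    traj z (fun s => α s + Set.indicator (Set.Ioc 0 T) (fun _ => u) s) t
      = traj z α t + (min t T) • u := by
  simp only [traj]
  have hint : IntegrableOn α (Set.Ioc 0 t) volume := hα t ht
  have hind : IntegrableOn (Set.indicator (Set.Ioc 0 T) (fun _ => u)) (Set.Ioc 0 t) volume :=
    (integrableOn_const measure_Ioc_lt_top.ne).indicator measurableSet_Ioc
  rw [integral_add hint hind]
  have hval : ∫ s in Set.Ioc (0:ℝ) t, Set.indicator (Set.Ioc 0 T) (fun _ => u) s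
      = (min t T) • u := by
    rw [setIntegral_indicator measurableSet_Ioc, Set.Ioc_inter_Ioc, setIntegral_const,
      measureReal_def, Real.volume_Ioc]
    rw [ENNReal.toReal_ofReal (by simp [le_min ht.le hT.le])]
    simp
  rw [hval, add_assoc]

lemma traj_contOn (z : Euc n) (α : ℝ → Euc n) (b : ℝ)
    (hint : IntegrableOn α (Set.Ioc 0 b) volume) :
    ContinuousOn (fun t => traj z α t) (Set.Icc 0 b) := by
  have h1 : IntegrableOn α (Set.Icc 0 b) volume :=
    hint.congr_set_ae Ioc_ae_eq_Icc.symm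
  exact continuousOn_const.add (intervalIntegral.continuousOn_primitive h1)
end

set_option maxHeartbeats 2000000

/-- under assumptions (A) and (B), `u_lam` is semiconcave with constant
`√(2(C₁+C₂)+1)`, independent of `lam`. -/
theorem stmt2 {n : ℕ} (f : Euc n → ℝ) (flo fhi C1 C2 : ℝ)
    (hcont : Continuous f) (hlo : ∀ x, flo ≤ f x) (hhi : ∀ x, f x ≤ fhi)
    (hattain : ∃ x, f x = flo)
    (hlip : ∀ x y : Euc n, |f x - f y| ≤ C1 * dist x y)
    (hsc : ∀ x h : Euc n, f (x + h) + f (x - h) - 2 * f x ≤ C2 * ‖h‖ ^ 2)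
    (lam : ℝ) (hlam : 0 < lam) :
    ∀ x h : Euc n, uLam f lam (x + h) + uLam f lam (x - h) - 2 * uLam f lam x
      ≤ Real.sqrt (2 * (C1 + C2) + 1) * ‖h‖ ^ 2 := by
  intro x h
  rcases eq_or_ne h 0 with rfl | hh
  · have : Real.sqrt (2 * (C1 + C2) + 1) * ‖(0 : Euc n)‖ ^ 2 = 0 := by
      simp
    simp only [add_zero, sub_zero, this]
    linarith
  have hnorm : 0 < ‖h‖ := norm_pos_iff.2 hh
  -- C1 ≥ 0
  have hC1 : 0 ≤ C1 := by
    have h1 := hlip x (x + h)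
    rw [dist_self_add_right] at h1
    nlinarith [abs_nonneg (f x - f (x + h))]
  -- C2 ≥ 0
  have hC2 : 0 ≤ C2 := by
    by_contra hC2
    push_neg at hC2
    obtain ⟨x0, hx0⟩ := hattain
    set D := 2 * fhi - 2 * flo with hD
    have hD0 : 0 ≤ D := by
      have := hhi x0
      simp only [hD]
      linarith [hx0 ▸ this]
    have hden : 0 < -C2 * ‖h‖ ^ 2 := mul_pos (neg_pos.2 hC2) (pow_pos hnorm 2)
    set r := Real.sqrt ((D + 1) / (-C2 * ‖h‖ ^ 2)) with hr
    have hpos : 0 < (D + 1) / (-C2 * ‖h‖ ^ 2) := div_pos (by linarith) hden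
    have hr2 : r ^ 2 = (D + 1) / (-C2 * ‖h‖ ^ 2) := Real.sq_sqrt hpos.le
    have hkey := hsc x (r • h)
    rw [norm_smul, Real.norm_eq_abs, abs_of_nonneg (Real.sqrt_nonneg _)] at hkey
    have heval : C2 * (r * ‖h‖) ^ 2 = -(D + 1) := by
      rw [mul_pow, hr2]
      field_simp [hC2.ne, hnorm.ne']
    rw [heval] at hkey
    have h5 := hlo (x + r • h)
    have h6 := hlo (x - r • h)
    have h7 := hhi x
    simp only [hD] at hkey h5 h6 h7 ⊢
    linarith
  -- main construction
  rw [sub_eq_add_neg x h]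
  set K := Real.sqrt (2 * (C1 + C2) + 1) with hKdef
  set s := Real.sqrt (2 * C2 + 1) with hsdef
  have hs : 0 < s := Real.sqrt_pos.2 (by linarith)
  have hs2 : s ^ 2 = 2 * C2 + 1 := Real.sq_sqrt (by linarith)
  set T := 2 / s with hTdef
  have hT : 0 < T := by positivity
  have hsK : s ≤ K := Real.sqrt_le_sqrt (by linarith)
  have har : ‖h‖ ^ 2 / T + C2 * ‖h‖ ^ 2 * (T / 2) ≤ K * ‖h‖ ^ 2 := by
    have e1 : ‖h‖ ^ 2 / T + C2 * ‖h‖ ^ 2 * (T / 2) = (s / 2 + C2 / s) * ‖h‖ ^ 2 := by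
      rw [hTdef]; field_simp
    rw [e1]
    have e2 : s / 2 + C2 / s ≤ K := by
      rw [div_add_div _ _ two_ne_zero hs.ne', div_le_iff₀ (by positivity)]
      nlinarith [mul_le_mul_of_nonneg_right hsK (by positivity : (0:ℝ) ≤ 2 * s)]
    exact mul_le_mul_of_nonneg_right e2 (sq_nonneg _)
  refine le_of_forall_pos_le_add ?_
  intro ε hε
  obtain ⟨c, hc, hclt0⟩ := Real.lt_sInf_add_pos (costSet_nonempty f lam hlam x) (half_pos hε)
  obtain ⟨α, hαm, hαI, rfl⟩ := hc
  have hclt : (∫ t in Set.Ioi (0:ℝ), dCost f lam x α t) < uLam f lam x + ε / 2 := by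
    rw [uLam_eq]; exact hclt0
  have hloc : ∀ b, 0 < b → IntegrableOn α (Set.Ioc 0 b) volume :=
    fun b hb => alpha_intOn f flo hlo lam hlam x α hαm hαI b hb
  have hsqloc : IntegrableOn (fun t => ‖α t‖ ^ 2) (Set.Ioc 0 T) volume :=
    alpha_sq_intOn f flo hlo lam hlam x α hαm hαI T hT
  set M := max |flo| |fhi| with hM
  have hfM : ∀ z : Euc n, |f z| ≤ M := by
    intro z
    rw [abs_le]
    refine ⟨?_, (hhi z).trans ((le_abs_self fhi).trans (le_max_right _ _))⟩
    calc -M ≤ -|flo| := neg_le_neg (le_max_left _ _)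
      _ ≤ flo := neg_abs_le flo
      _ ≤ f z := hlo z
  -- integrability of the perturbed-cost formula on (0, T]
  have gint : ∀ v : Euc n,
      IntegrableOn (fun t => ((1/2) * ‖α t - T⁻¹ • v‖ ^ 2
        + f (traj x α t + (1 - t / T) • v)) * Real.exp (-(lam * t))) (Set.Ioc 0 T) volume := by
    intro v
    have hdom : IntegrableOn
        (fun t => ‖α t‖ ^ 2 + (‖(T⁻¹ • v : Euc n)‖ ^ 2 + M)) (Set.Ioc 0 T) volume :=
      hsqloc.add (integrableOn_const measure_Ioc_lt_top.ne)
    have hcont2 : ContinuousOn (fun t => f (traj x α t + (1 - t / T) • v)) (Set.Icc 0 T) :=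
      hcont.comp_continuousOn ((traj_contOn x α T (hloc T hT)).add
        (Continuous.continuousOn ((continuous_const.sub (continuous_id.div_const T)).smul continuous_const)))
    have hG : AEStronglyMeasurable (fun t => ((1/2) * ‖α t - T⁻¹ • v‖ ^ 2
        + f (traj x α t + (1 - t / T) • v)) * Real.exp (-(lam * t)))
        (volume.restrict (Set.Ioc 0 T)) := by
      refine AEStronglyMeasurable.mul (AEStronglyMeasurable.add ?_ ?_) ?_
      · exact (((hαm.sub measurable_const).norm.pow_const 2).const_mul _).aestronglyMeasurable
      · exact (hcont2.aestronglyMeasurable measurableSet_Icc).mono_measure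
          (Measure.restrict_mono Set.Ioc_subset_Icc_self le_rfl)
      · exact (Real.continuous_exp.comp ((continuous_const.mul continuous_id).neg)).aestronglyMeasurable
    refine Integrable.mono' hdom hG ?_
    refine (ae_restrict_iff' measurableSet_Ioc).2 (ae_of_all _ ?_)
    intro t ht
    have hE1 : Real.exp (-(lam * t)) ≤ 1 :=
      Real.exp_le_one_iff.2 (by nlinarith [ht.1, mul_pos hlam ht.1])
    have h1 : ‖α t - T⁻¹ • v‖ ≤ ‖α t‖ + ‖(T⁻¹ • v : Euc n)‖ := norm_sub_le _ _
    have h2 := hfM (traj x α t + (1 - t / T) • v)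
    rw [Real.norm_eq_abs, abs_mul, Real.abs_exp]
    have h3 : |(1/2) * ‖α t - T⁻¹ • v‖ ^ 2 + f (traj x α t + (1 - t / T) • v)|
        ≤ ‖α t‖ ^ 2 + (‖(T⁻¹ • v : Euc n)‖ ^ 2 + M) := by
      have hA2 : ‖α t - T⁻¹ • v‖ ^ 2 ≤ (‖α t‖ + ‖(T⁻¹ • v : Euc n)‖) ^ 2 :=
        pow_le_pow_left₀ (norm_nonneg _) h1 2
      have hsq : (‖α t‖ + ‖(T⁻¹ • v : Euc n)‖) ^ 2
          ≤ 2 * ‖α t‖ ^ 2 + 2 * ‖(T⁻¹ • v : Euc n)‖ ^ 2 := by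
        nlinarith [sq_nonneg (‖α t‖ - ‖(T⁻¹ • v : Euc n)‖)]
      obtain ⟨h2l, h2r⟩ := abs_le.1 h2
      rw [abs_le]
      constructor
      · linarith [sq_nonneg ‖α t - T⁻¹ • v‖, sq_nonneg ‖α t‖, sq_nonneg ‖(T⁻¹ • v : Euc n)‖]
      · linarith
    calc |(1/2) * ‖α t - T⁻¹ • v‖ ^ 2 + f (traj x α t + (1 - t / T) • v)| * Real.exp (-(lam * t))
        ≤ |(1/2) * ‖α t - T⁻¹ • v‖ ^ 2 + f (traj x α t + (1 - t / T) • v)| * 1 :=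
          mul_le_mul_of_nonneg_left hE1 (abs_nonneg _)
      _ = |(1/2) * ‖α t - T⁻¹ • v‖ ^ 2 + f (traj x α t + (1 - t / T) • v)| := mul_one _
      _ ≤ _ := h3
  -- the key estimate for a perturbed control
  have key : ∀ v : Euc n,
      uLam f lam (x + v) ≤ (∫ t in Set.Ioc (0:ℝ) T,
          ((1/2) * ‖α t - T⁻¹ • v‖ ^ 2 + f (traj x α t + (1 - t / T) • v))
            * Real.exp (-(lam * t)))
        + ∫ t in Set.Ioi T, dCost f lam x α t := by
    intro v
    set β : ℝ → Euc n :=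
      fun s => α s + Set.indicator (Set.Ioc 0 T) (fun _ => -(T⁻¹ • v)) s with hβ
    have hβmeas : Measurable β := hαm.add (measurable_const.indicator measurableSet_Ioc)
    have htraj : ∀ t, 0 < t → traj (x + v) β t = traj x α t + (1 - min t T / T) • v := by
      intro t ht
      rw [hβ, traj_shift (x + v) α hloc T hT _ t ht]
      have h1 : traj (x + v) α t = traj x α t + v := by
        simp only [traj]; abel
      rw [h1, smul_neg, smul_smul, sub_smul, one_smul, ← div_eq_mul_inv]
      abel
    have heqT : Set.EqOn (dCost f lam (x + v) β) (dCost f lam x α) (Set.Ioi T) := by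
      intro t ht
      have ht0 : 0 < t := hT.trans ht
      have hnm : t ∉ Set.Ioc (0:ℝ) T := fun hm => (not_le.2 ht) hm.2
      have hβt : β t = α t := by
        simp only [hβ, Set.indicator_of_notMem hnm, add_zero]
      have hmin : min t T = T := min_eq_right (le_of_lt ht)
      simp only [dCost, hβt, htraj t ht0, hmin, div_self hT.ne', sub_self, zero_smul, add_zero]
    have heqI : Set.EqOn (dCost f lam (x + v) β)
        (fun t => ((1/2) * ‖α t - T⁻¹ • v‖ ^ 2 + f (traj x α t + (1 - t / T) • v))
          * Real.exp (-(lam * t))) (Set.Ioc 0 T) := by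
      intro t ht
      have hmin : min t T = t := min_eq_left ht.2
      have hβt : β t = α t - T⁻¹ • v := by
        simp only [hβ, Set.indicator_of_mem ht, ← sub_eq_add_neg]
      simp only [dCost, hβt, htraj t ht.1, hmin]
    have hIoc : IntegrableOn (dCost f lam (x + v) β) (Set.Ioc 0 T) volume :=
      (gint v).congr_fun (fun t ht => (heqI ht).symm) measurableSet_Ioc
    have hIoiT : IntegrableOn (dCost f lam (x + v) β) (Set.Ioi T) volume :=
      (hαI.mono_set (Set.Ioi_subset_Ioi hT.le)).congr_fun
        (fun t ht => (heqT ht).symm) measurableSet_Ioi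
    have hIoi : IntegrableOn (dCost f lam (x + v) β) (Set.Ioi 0) volume := by
      rw [← Set.Ioc_union_Ioi_eq_Ioi hT.le]
      exact hIoc.union hIoiT
    have hle : uLam f lam (x + v) ≤ ∫ t in Set.Ioi (0:ℝ), dCost f lam (x + v) β t := by
      rw [uLam_eq]
      exact csInf_le (costSet_bddBelow f flo lam hlo hlam (x + v)) ⟨β, hβmeas, hIoi, rfl⟩
    have hsplit : (∫ t in Set.Ioi (0:ℝ), dCost f lam (x + v) β t)
        = (∫ t in Set.Ioc (0:ℝ) T, dCost f lam (x + v) β t)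
          + ∫ t in Set.Ioi T, dCost f lam (x + v) β t := by
      rw [← setIntegral_union (Set.Ioc_disjoint_Ioi le_rfl) measurableSet_Ioi hIoc hIoiT,
        Set.Ioc_union_Ioi_eq_Ioi hT.le]
    rw [hsplit, setIntegral_congr_fun measurableSet_Ioi heqT,
      setIntegral_congr_fun measurableSet_Ioc heqI] at hle
    exact hle
  -- splitting for the reference control
  have hαIoc : IntegrableOn (dCost f lam x α) (Set.Ioc 0 T) volume :=
    hαI.mono_set Set.Ioc_subset_Ioi_self
  have hαIoiT : IntegrableOn (dCost f lam x α) (Set.Ioi T) volume :=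
    hαI.mono_set (Set.Ioi_subset_Ioi hT.le)
  have hαsplit : (∫ t in Set.Ioi (0:ℝ), dCost f lam x α t)
      = (∫ t in Set.Ioc (0:ℝ) T, dCost f lam x α t) + ∫ t in Set.Ioi T, dCost f lam x α t := by
    rw [← setIntegral_union (Set.Ioc_disjoint_Ioi le_rfl) measurableSet_Ioi hαIoc hαIoiT,
      Set.Ioc_union_Ioi_eq_Ioi hT.le]
  -- pointwise comparison on (0, T]
  have hpt : ∀ t ∈ Set.Ioc (0:ℝ) T,
      ((fun t => ((1/2) * ‖α t - T⁻¹ • h‖ ^ 2 + f (traj x α t + (1 - t / T) • h))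
          * Real.exp (-(lam * t))) t
        + (fun t => ((1/2) * ‖α t - T⁻¹ • (-h)‖ ^ 2 + f (traj x α t + (1 - t / T) • (-h)))
          * Real.exp (-(lam * t))) t)
        - (fun t => 2 * dCost f lam x α t) t
      ≤ ‖h‖ ^ 2 / T ^ 2 + C2 * ‖h‖ ^ 2 * (1 - t / T) := by
    intro t ht
    simp only
    have hw0 : 0 ≤ 1 - t / T := by
      have := (div_le_one hT).2 ht.2; linarith
    have hw1 : 1 - t / T ≤ 1 := by
      have : 0 ≤ t / T := div_nonneg ht.1.le hT.le; linarith
    have hE0 : 0 < Real.exp (-(lam * t)) := Real.exp_pos _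
    have hE1 : Real.exp (-(lam * t)) ≤ 1 :=
      Real.exp_le_one_iff.2 (by nlinarith [mul_pos hlam ht.1])
    have hGm : ((1/2) * ‖α t - T⁻¹ • (-h)‖ ^ 2 + f (traj x α t + (1 - t / T) • (-h)))
          * Real.exp (-(lam * t))
        = ((1/2) * ‖α t + T⁻¹ • h‖ ^ 2 + f (traj x α t - (1 - t / T) • h))
          * Real.exp (-(lam * t)) := by
      rw [smul_neg, sub_neg_eq_add, smul_neg, ← sub_eq_add_neg]
    have hdc : dCost f lam x α t
        = ((1/2) * ‖α t‖ ^ 2 + f (traj x α t)) * Real.exp (-(lam * t)) := rfl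
    rw [hGm, hdc]
    have hnormid : ‖α t - T⁻¹ • h‖ ^ 2 + ‖α t + T⁻¹ • h‖ ^ 2
        = 2 * ‖α t‖ ^ 2 + 2 * ‖(T⁻¹ • h : Euc n)‖ ^ 2 := by
      rw [norm_sub_sq_real, norm_add_sq_real]; ring
    have hu2 : ‖(T⁻¹ • h : Euc n)‖ ^ 2 = ‖h‖ ^ 2 / T ^ 2 := by
      rw [norm_smul, Real.norm_eq_abs, abs_of_pos (inv_pos.2 hT), mul_pow]
      field_simp
    have hfs : f (traj x α t + (1 - t / T) • h) + f (traj x α t - (1 - t / T) • h)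
        - 2 * f (traj x α t) ≤ C2 * (1 - t / T) * ‖h‖ ^ 2 := by
      have hkey := hsc (traj x α t) ((1 - t / T) • h)
      rw [norm_smul, Real.norm_eq_abs, abs_of_nonneg hw0, mul_pow] at hkey
      nlinarith [mul_nonneg (mul_nonneg (mul_nonneg hC2 hw0) (sub_nonneg.2 hw1))
        (sq_nonneg ‖h‖)]
    have expand : ((1/2) * ‖α t - T⁻¹ • h‖ ^ 2 + f (traj x α t + (1 - t / T) • h))
            * Real.exp (-(lam * t))
          + ((1/2) * ‖α t + T⁻¹ • h‖ ^ 2 + f (traj x α t - (1 - t / T) • h))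
            * Real.exp (-(lam * t))
          - 2 * (((1/2) * ‖α t‖ ^ 2 + f (traj x α t)) * Real.exp (-(lam * t)))
        = (‖(T⁻¹ • h : Euc n)‖ ^ 2 + (f (traj x α t + (1 - t / T) • h)
            + f (traj x α t - (1 - t / T) • h) - 2 * f (traj x α t)))
            * Real.exp (-(lam * t)) := by
      linear_combination (Real.exp (-(lam * t)) / 2) * hnormid
    rw [expand]
    have hb0 : 0 ≤ ‖(T⁻¹ • h : Euc n)‖ ^ 2 + C2 * (1 - t / T) * ‖h‖ ^ 2 :=
      add_nonneg (sq_nonneg _) (mul_nonneg (mul_nonneg hC2 hw0) (sq_nonneg _))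
    calc (‖(T⁻¹ • h : Euc n)‖ ^ 2 + (f (traj x α t + (1 - t / T) • h)
            + f (traj x α t - (1 - t / T) • h) - 2 * f (traj x α t)))
            * Real.exp (-(lam * t))
        ≤ (‖(T⁻¹ • h : Euc n)‖ ^ 2 + C2 * (1 - t / T) * ‖h‖ ^ 2) * Real.exp (-(lam * t)) :=
          mul_le_mul_of_nonneg_right (by linarith) hE0.le
      _ ≤ (‖(T⁻¹ • h : Euc n)‖ ^ 2 + C2 * (1 - t / T) * ‖h‖ ^ 2) * 1 :=
          mul_le_mul_of_nonneg_left hE1 hb0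
      _ = ‖h‖ ^ 2 / T ^ 2 + C2 * ‖h‖ ^ 2 * (1 - t / T) := by rw [mul_one, hu2]; ring
  -- integral comparison on (0, T]
  have hint1 := gint h
  have hint2 := gint (-h)
  have hBint : IntegrableOn (fun t => ‖h‖ ^ 2 / T ^ 2 + C2 * ‖h‖ ^ 2 * (1 - t / T))
      (Set.Ioc 0 T) volume :=
    (Continuous.integrableOn_Ioc (continuous_const.add (continuous_const.mul (continuous_const.sub (continuous_id.div_const T)))))
  have hsum : IntegrableOn (fun t =>
      ((1/2) * ‖α t - T⁻¹ • h‖ ^ 2 + f (traj x α t + (1 - t / T) • h)) * Real.exp (-(lam * t))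
      + ((1/2) * ‖α t - T⁻¹ • (-h)‖ ^ 2 + f (traj x α t + (1 - t / T) • (-h)))
        * Real.exp (-(lam * t))) (Set.Ioc 0 T) volume := hint1.add hint2
  have h2m : IntegrableOn (fun t => 2 * dCost f lam x α t) (Set.Ioc 0 T) volume :=
    hαIoc.const_mul 2
  have hmono : (∫ t in Set.Ioc (0:ℝ) T,
        (((1/2) * ‖α t - T⁻¹ • h‖ ^ 2 + f (traj x α t + (1 - t / T) • h))
            * Real.exp (-(lam * t))
          + ((1/2) * ‖α t - T⁻¹ • (-h)‖ ^ 2 + f (traj x α t + (1 - t / T) • (-h)))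
            * Real.exp (-(lam * t))
          - 2 * dCost f lam x α t))
      ≤ ∫ t in Set.Ioc (0:ℝ) T, (‖h‖ ^ 2 / T ^ 2 + C2 * ‖h‖ ^ 2 * (1 - t / T)) :=
    setIntegral_mono_on (hsum.sub h2m) hBint measurableSet_Ioc hpt
  rw [integral_sub hsum h2m, integral_add hint1 hint2, integral_const_mul] at hmono
  have hBval : (∫ t in Set.Ioc (0:ℝ) T, (‖h‖ ^ 2 / T ^ 2 + C2 * ‖h‖ ^ 2 * (1 - t / T)))
      = ‖h‖ ^ 2 / T + C2 * ‖h‖ ^ 2 * (T / 2) := by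
    rw [← intervalIntegral.integral_of_le hT.le]
    have hrw : ∀ t : ℝ, ‖h‖ ^ 2 / T ^ 2 + C2 * ‖h‖ ^ 2 * (1 - t / T)
        = (‖h‖ ^ 2 / T ^ 2 + C2 * ‖h‖ ^ 2) + (-(C2 * ‖h‖ ^ 2 / T)) * t := by
      intro t; field_simp; ring
    simp_rw [hrw]
    rw [_root_.intervalIntegral.integral_add intervalIntegrable_const
      (IntervalIntegrable.const_mul _root_.intervalIntegral.intervalIntegrable_id _), _root_.intervalIntegral.integral_const_mul,
      _root_.integral_id, _root_.intervalIntegral.integral_const]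
    field_simp [hT.ne']
    have hTi : T * T⁻¹ = 1 := mul_inv_cancel₀ hT.ne'
    linear_combination (T * T⁻¹ + 1) * (2 * ‖h‖ ^ 2 + 2 * T ^ 2 * ‖h‖ ^ 2 * C2) * hTi
  rw [hBval] at hmono
  have hkp := key h
  have hkm := key (-h)
  linarith [hkp, hkm, hmono, hαsplit, har, hclt]
end

section
/- Assume (A) and (B). Then for every t ≥ 0 the function x ↦ u(x,t) is C̃₃-semiconcave with C̃₃ := √(C₁ + C₂), i.e. u(x+h,t) + u(x−h,t) − 2u(x,t) ≤ C̃₃ |h|² for all x, h ∈ ℝⁿ; in particular the semiconcavity constant is independent of t. -/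
open MeasureTheory Filter Metric Set Topology

section Aux
open MeasureTheory Filter Metric Set Topology

/-- Elementary integral: `∫_0^s m e^{-mr} dr = 1 - e^{-ms}`. -/
lemma intExp (m s : ℝ) (hs : 0 ≤ s) :
    (∫ r in Set.Ioc (0:ℝ) s, m * Real.exp (-(m * r))) = 1 - Real.exp (-(m*s)) := by
  rw [← intervalIntegral.integral_of_le hs]
  have hd : ∀ r ∈ Set.uIcc (0:ℝ) s,
      HasDerivAt (fun r => -Real.exp (-(m*r))) (m * Real.exp (-(m*r))) r := by
    intro r _
    have h1 : HasDerivAt (fun r : ℝ => -(m*r)) (-m) r := by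
      simpa using ((hasDerivAt_id r).const_mul m).fun_neg
    have h2 := (Real.hasDerivAt_exp (-(m*r))).comp r h1
    exact h2.fun_neg.congr_deriv (by ring)
  rw [intervalIntegral.integral_eq_sub_of_hasDerivAt hd
    (by apply Continuous.intervalIntegrable; continuity)]
  simp; ring

/-- Trajectory of the perturbed control. -/
lemma trajP {n : ℕ} (x h : Euc n) (m t : ℝ) (α : ℝ → Euc n)
    (hα1 : IntegrableOn α (Set.Ioc 0 t))
    (s : ℝ) (hs : s ∈ Set.Ioc (0:ℝ) t) :
    traj (x + h) (fun r => α r - (m * Real.exp (-(m*r))) • h) s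
      = traj x α s + Real.exp (-(m*s)) • h := by
  have hαs : IntegrableOn α (Set.Ioc 0 s) := hα1.mono_set (Set.Ioc_subset_Ioc_right hs.2)
  have hws : IntegrableOn (fun r => (m * Real.exp (-(m*r))) • h) (Set.Ioc 0 s) := by
    apply Continuous.integrableOn_Ioc
    fun_prop
  simp only [traj]
  rw [integral_sub hαs hws]
  have hval : (∫ r in Set.Ioc (0:ℝ) s, (m * Real.exp (-(m*r))) • h)
      = (1 - Real.exp (-(m*s))) • h := by
    rw [integral_smul_const, intExp m s hs.1.le]
  rw [hval]
  have e1 : ((1:ℝ) - Real.exp (-(m*s))) • h = h - Real.exp (-(m*s)) • h := by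
    rw [sub_smul, one_smul]
  rw [e1]
  abel

/-- Integrability of the running cost for a control with integrable square norm. -/
lemma key_int {n : ℕ} {flo fhi : ℝ} (f : Euc n → ℝ) (hcont : Continuous f)
    (hlo : ∀ x, flo ≤ f x) (hhi : ∀ x, f x ≤ fhi)
    (t : ℝ) (z : Euc n) (β : ℝ → Euc n) (_hβ : Measurable β)
    (hβ1 : IntegrableOn β (Set.Icc 0 t))
    (hβ2 : IntegrableOn (fun s => ‖β s‖^2) (Set.Ioc 0 t)) :
    IntegrableOn (fCost f z β) (Set.Ioc 0 t) := by
  have hker : IntegrableOn (fun s => (1/2 : ℝ) * ‖β s‖^2) (Set.Ioc 0 t) := hβ2.const_mul _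
  have hprim : ContinuousOn (fun s => f (traj z β s)) (Set.Icc 0 t) := by
    have h1 : ContinuousOn (fun s => ∫ r in Set.Ioc (0:ℝ) s, β r) (Set.Icc 0 t) :=
      intervalIntegral.continuousOn_primitive hβ1
    exact hcont.comp_continuousOn (continuousOn_const.add h1)
  have hmeas : AEStronglyMeasurable (fun s => f (traj z β s))
      (volume.restrict (Set.Ioc 0 t)) :=
    (hprim.mono Set.Ioc_subset_Icc_self).aestronglyMeasurable measurableSet_Ioc
  have hfint : IntegrableOn (fun s => f (traj z β s)) (Set.Ioc 0 t) := by
    apply Integrable.mono' (g := fun _ => |flo| + |fhi|)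
      (integrableOn_const measure_Ioc_lt_top.ne) hmeas
    filter_upwards with s
    have h1 := hlo (traj z β s); have h2 := hhi (traj z β s)
    rw [Real.norm_eq_abs, abs_le]
    constructor <;> nlinarith [neg_abs_le flo, le_abs_self fhi, abs_nonneg flo, abs_nonneg fhi]
  exact hker.add hfint

/-- Integrability of the square norm of a perturbed control. -/
lemma sq_int {n : ℕ} (t : ℝ) (α w β : ℝ → Euc n)
    (hα2 : IntegrableOn (fun s => ‖α s‖^2) (Set.Ioc 0 t))
    (hw2 : IntegrableOn (fun s => ‖w s‖^2) (Set.Ioc 0 t))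
    (hβm : Measurable β) (hβ : ∀ r, β r = α r - w r ∨ β r = α r + w r) :
    IntegrableOn (fun s => ‖β s‖^2) (Set.Ioc 0 t) := by
  have h1 : IntegrableOn (fun s => 2*‖α s‖^2) (Set.Ioc 0 t) := hα2.const_mul 2
  have h2 : IntegrableOn (fun s => 2*‖w s‖^2) (Set.Ioc 0 t) := hw2.const_mul 2
  have h3 : IntegrableOn (fun s => 2*‖α s‖^2 + 2*‖w s‖^2) (Set.Ioc 0 t) := h1.add h2
  have h4 : AEStronglyMeasurable (fun s => ‖β s‖^2)
      (volume.restrict (Set.Ioc 0 t)) := (hβm.norm.pow_const 2).aestronglyMeasurable.restrict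
  apply Integrable.mono' h3 h4
  filter_upwards with s
  rw [Real.norm_eq_abs, abs_of_nonneg (sq_nonneg _)]
  rcases hβ s with hb | hb <;> rw [hb]
  · rw [norm_sub_sq_real]
    nlinarith [abs_real_inner_le_norm (α s) (w s), abs_nonneg (inner ℝ (α s) (w s) : ℝ),
      neg_abs_le (inner ℝ (α s) (w s) : ℝ), le_abs_self (inner ℝ (α s) (w s) : ℝ),
      sq_nonneg (‖α s‖ - ‖w s‖)]
  · rw [norm_add_sq_real]
    nlinarith [abs_real_inner_le_norm (α s) (w s), abs_nonneg (inner ℝ (α s) (w s) : ℝ),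
      neg_abs_le (inner ℝ (α s) (w s) : ℝ), le_abs_self (inner ℝ (α s) (w s) : ℝ),
      sq_nonneg (‖α s‖ - ‖w s‖)]

/-- The set of achievable finite-horizon costs. -/
def Sset {n : ℕ} (f : Euc n → ℝ) (t : ℝ) (z : Euc n) : Set ℝ :=
  {c : ℝ | ∃ α : ℝ → Euc n, Measurable α ∧
    IntegrableOn (fCost f z α) (Set.Ioc 0 t) volume ∧
    c = ∫ s in Set.Ioc (0 : ℝ) t, fCost f z α s}

lemma uT_eq {n : ℕ} (f : Euc n → ℝ) (t : ℝ) (z : Euc n) :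
    uT f z t = sInf (Sset f t z) := rfl

lemma Sset_nonempty {n : ℕ} (f : Euc n → ℝ) (t : ℝ) (z : Euc n) : (Sset f t z).Nonempty := by
  refine ⟨∫ s in Set.Ioc (0:ℝ) t, fCost f z (fun _ => 0) s, fun _ => 0,
    measurable_const, ?_, rfl⟩
  have hc : fCost f z (fun _ => (0 : Euc n)) = fun _ => f z := by
    funext s; simp [fCost, traj]
  rw [hc]
  exact integrableOn_const measure_Ioc_lt_top.ne

lemma Sset_lb {n : ℕ} (f : Euc n → ℝ) {flo : ℝ} (hlo : ∀ x, flo ≤ f x) (t : ℝ) (ht : 0 ≤ t)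
    (z : Euc n) : ∀ c ∈ Sset f t z, flo * t ≤ c := by
  rintro c ⟨α, hα, hint, rfl⟩
  have h1 : ∫ s in Set.Ioc (0:ℝ) t, (fun _ => flo) s = flo * t := by
    rw [setIntegral_const, Real.volume_real_Ioc_of_le ht, smul_eq_mul]
    ring
  rw [← h1]
  refine setIntegral_mono_on (integrableOn_const measure_Ioc_lt_top.ne) hint
    measurableSet_Ioc (fun s _ => ?_)
  simp only [fCost]; nlinarith [hlo (traj z α s), sq_nonneg ‖α s‖]

lemma Sset_bdd {n : ℕ} (f : Euc n → ℝ) {flo : ℝ} (hlo : ∀ x, flo ≤ f x) (t : ℝ) (ht : 0 ≤ t)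
    (z : Euc n) : BddBelow (Sset f t z) := ⟨flo * t, fun c hc => Sset_lb f hlo t ht z c hc⟩

/-- Boundedness of `f` forces the semiconcavity constant to be nonnegative. -/
lemma C2nonneg {n : ℕ} (f : Euc n → ℝ) (flo fhi C2 : ℝ)
    (hlo : ∀ x, flo ≤ f x) (hhi : ∀ x, f x ≤ fhi)
    (hsc : ∀ x h : Euc n, f (x + h) + f (x - h) - 2 * f x ≤ C2 * ‖h‖ ^ 2)
    (x h : Euc n) (hh : h ≠ 0) : 0 ≤ C2 := by
  by_contra hneg
  push_neg at hneg
  have hfl : flo ≤ fhi := le_trans (hlo x) (hhi x)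
  set d : ℝ := (2*(fhi - flo) + 1)/(-C2) with hd
  have hdpos : 0 < d := by
    apply div_pos (by linarith) (by linarith)
  set H : Euc n := (Real.sqrt d / ‖h‖) • h with hH
  have hHn : ‖H‖^2 = d := by
    rw [hH, norm_smul, Real.norm_eq_abs, abs_div,
      abs_of_nonneg (Real.sqrt_nonneg d), abs_norm,
      div_mul_cancel₀ _ (norm_ne_zero_iff.2 hh)]
    exact Real.sq_sqrt hdpos.le
  have h1 := hsc x H
  have h2 : C2 * ‖H‖^2 = -(2*(fhi-flo)+1) := by
    rw [hHn, hd, mul_div_assoc']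
    rw [div_eq_iff (by linarith : -C2 ≠ 0)]; ring
  rw [h2] at h1
  nlinarith [hlo (x+H), hlo (x-H), hhi x]

end Aux

set_option maxHeartbeats 1600000

/-- under assumptions (A) and (B), for every `t ≥ 0` the map `x ↦ u(x,t)`
is semiconcave with constant `√(C₁+C₂)`, independent of `t`. -/
theorem stmt6 {n : ℕ} (f : Euc n → ℝ) (flo fhi C1 C2 : ℝ)
    (hcont : Continuous f) (hlo : ∀ x, flo ≤ f x) (hhi : ∀ x, f x ≤ fhi)
    (hattain : ∃ x, f x = flo)
    (hlip : ∀ x y : Euc n, |f x - f y| ≤ C1 * dist x y)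
    (hsc : ∀ x h : Euc n, f (x + h) + f (x - h) - 2 * f x ≤ C2 * ‖h‖ ^ 2)
    (t : ℝ) (ht : 0 ≤ t) :
    ∀ x h : Euc n, uT f (x + h) t + uT f (x - h) t - 2 * uT f x t
      ≤ Real.sqrt (C1 + C2) * ‖h‖ ^ 2 := by
  intro x h
  by_cases hh : h = 0
  · subst hh
    simp only [add_zero, sub_zero, norm_zero]
    ring_nf
    positivity
  have hC1 : 0 ≤ C1 := by
    have h1 := hlip (x+h) x
    have hd : dist (x+h) x = ‖h‖ := by
      rw [dist_eq_norm]; simp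
    rw [hd] at h1
    nlinarith [abs_nonneg (f (x+h) - f x), norm_pos_iff.mpr hh]
  have hC2 : 0 ≤ C2 := C2nonneg f flo fhi C2 hlo hhi hsc x h hh
  set m := Real.sqrt C2 with hmdef
  have hm : 0 ≤ m := Real.sqrt_nonneg _
  have hm2 : m^2 = C2 := Real.sq_sqrt hC2
  set K := Real.sqrt (C1 + C2) with hK
  have hmK : m ≤ K := Real.sqrt_le_sqrt (by linarith)
  -- ε-argument
  refine le_of_forall_pos_le_add (fun ε hε => ?_)
  obtain ⟨c, hcS, hclt⟩ := Real.lt_sInf_add_pos (Sset_nonempty f t x) (by positivity : (0:ℝ) < ε/2)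
  rw [← uT_eq] at hclt
  obtain ⟨α, hα, hint, rfl⟩ := hcS
  -- integrability of α
  have hα2 : IntegrableOn (fun s => ‖α s‖^2) (Set.Ioc 0 t) := by
    apply Integrable.mono' (g := fun s => 2*(fCost f x α s - flo))
      ((hint.sub (integrableOn_const measure_Ioc_lt_top.ne)).const_mul 2)
      (((hα.norm).pow_const 2).aestronglyMeasurable.restrict)
    filter_upwards with s
    have h1 := hlo (traj x α s)
    rw [Real.norm_eq_abs, abs_of_nonneg (sq_nonneg _)]
    simp only [fCost]
    nlinarith
  have hα1 : IntegrableOn α (Set.Ioc 0 t) := by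
    apply Integrable.mono' (g := fun s => 1 + ‖α s‖^2)
      (by
        have h0 : IntegrableOn (fun _ => (1:ℝ)) (Set.Ioc 0 t) := integrableOn_const measure_Ioc_lt_top.ne
        exact h0.add hα2)
      hα.aestronglyMeasurable.restrict
    filter_upwards with s
    nlinarith [norm_nonneg (α s), sq_nonneg (‖α s‖ - 1)]
  have hα1' : IntegrableOn α (Set.Icc 0 t) := by
    rwa [integrableOn_Icc_iff_integrableOn_Ioc]
  -- perturbed controls
  set w : ℝ → Euc n := fun r => (m * Real.exp (-(m*r))) • h with hwdef
  have hwcont : Continuous w := by fun_prop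
  set αp : ℝ → Euc n := fun r => α r - w r with hαpdef
  set αm : ℝ → Euc n := fun r => α r - (m * Real.exp (-(m*r))) • (-h) with hαmdef
  have hαmeq : ∀ r, αm r = α r + w r := by
    intro r; simp [hαmdef, hwdef, smul_neg, sub_neg_eq_add]
  have hαp : Measurable αp := hα.sub hwcont.measurable
  have hαm : Measurable αm := by
    apply Measurable.sub hα
    fun_prop
  -- traj identities
  have htrp : ∀ s ∈ Set.Ioc (0:ℝ) t,
      traj (x + h) αp s = traj x α s + Real.exp (-(m*s)) • h :=
    fun s hs => trajP x h m t α hα1 s hs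
  have htrm : ∀ s ∈ Set.Ioc (0:ℝ) t,
      traj (x - h) αm s = traj x α s - Real.exp (-(m*s)) • h := by
    intro s hs
    have := trajP x (-h) m t α hα1 s hs
    rw [← sub_eq_add_neg] at this
    rw [hαmdef]
    rw [this, smul_neg, ← sub_eq_add_neg]
  -- exp square helper
  have hexp2 : ∀ s : ℝ, Real.exp (-(m*s)) ^ 2 = Real.exp (-(2*m*s)) := by
    intro s; rw [sq, ← Real.exp_add]; ring_nf
  -- pointwise bound
  have hpt : ∀ s ∈ Set.Ioc (0:ℝ) t,
      fCost f (x+h) αp s + fCost f (x-h) αm s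
        ≤ 2 * fCost f x α s + ((C2 + m^2) * ‖h‖^2) * Real.exp (-(2*m*s)) := by
    intro s hs
    have e1 := htrp s hs
    have e2 := htrm s hs
    have hfs := hsc (traj x α s) (Real.exp (-(m*s)) • h)
    have hηn : ‖Real.exp (-(m*s)) • h‖^2 = Real.exp (-(2*m*s)) * ‖h‖^2 := by
      rw [norm_smul, Real.norm_eq_abs, abs_of_pos (Real.exp_pos _), mul_pow, hexp2]
    have hwn : ‖w s‖^2 = m^2 * Real.exp (-(2*m*s)) * ‖h‖^2 := by
      rw [hwdef]
      simp only
      rw [norm_smul, Real.norm_eq_abs, abs_of_nonneg (by positivity), mul_pow, mul_pow, hexp2]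
    have hpar : ‖αp s‖^2 + ‖αm s‖^2 = 2*‖α s‖^2 + 2*‖w s‖^2 := by
      rw [hαmeq s, hαpdef]
      simp only
      rw [norm_sub_sq_real, norm_add_sq_real]
      ring
    simp only [fCost]
    rw [e1, e2]
    rw [hηn] at hfs
    nlinarith [hpar, hwn]
  -- integrability of perturbed costs
  have hwicc : IntegrableOn w (Set.Icc 0 t) := hwcont.integrableOn_Icc
  have hw2 : IntegrableOn (fun s => ‖w s‖^2) (Set.Ioc 0 t) := by
    apply Continuous.integrableOn_Ioc; fun_prop
  have hintp : IntegrableOn (fCost f (x+h) αp) (Set.Ioc 0 t) :=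
    key_int f hcont hlo hhi t (x+h) αp hαp (hα1'.sub hwicc)
      (sq_int t α w αp hα2 hw2 hαp (fun r => Or.inl rfl))
  have hintm : IntegrableOn (fCost f (x-h) αm) (Set.Ioc 0 t) :=
    key_int f hcont hlo hhi t (x-h) αm hαm
      (by
        have : IntegrableOn (fun r => α r + w r) (Set.Icc 0 t) := hα1'.add hwicc
        exact this.congr_fun (fun r _ => (hαmeq r).symm) measurableSet_Icc)
      (sq_int t α w αm hα2 hw2 hαm (fun r => Or.inr (hαmeq r)))
  -- integral comparison
  have hecont : Continuous (fun s : ℝ => ((C2 + m^2) * ‖h‖^2) * Real.exp (-(2*m*s))) := by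
    fun_prop
  have hrhs : IntegrableOn
      (fun s => 2 * fCost f x α s + ((C2 + m^2) * ‖h‖^2) * Real.exp (-(2*m*s)))
      (Set.Ioc 0 t) := (hint.const_mul 2).add (hecont.integrableOn_Ioc)
  set J := ∫ s in Set.Ioc (0:ℝ) t, Real.exp (-(2*m*s)) with hJdef
  have hsum : (∫ s in Set.Ioc (0:ℝ) t, fCost f (x+h) αp s)
      + (∫ s in Set.Ioc (0:ℝ) t, fCost f (x-h) αm s)
      ≤ 2 * (∫ s in Set.Ioc (0:ℝ) t, fCost f x α s) + ((C2 + m^2) * ‖h‖^2) * J := by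
    rw [← integral_add hintp hintm]
    have step := setIntegral_mono_on (hintp.add hintm) hrhs measurableSet_Ioc hpt
    calc (∫ s in Set.Ioc (0:ℝ) t, (fCost f (x+h) αp s + fCost f (x-h) αm s))
        ≤ ∫ s in Set.Ioc (0:ℝ) t,
            (2 * fCost f x α s + ((C2 + m^2) * ‖h‖^2) * Real.exp (-(2*m*s))) := step
      _ = 2 * (∫ s in Set.Ioc (0:ℝ) t, fCost f x α s) + ((C2 + m^2) * ‖h‖^2) * J := by
          rw [integral_add (hint.const_mul 2) hecont.integrableOn_Ioc,
            integral_const_mul, integral_const_mul]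
  -- bound on J-term
  have hJterm : ((C2 + m^2) * ‖h‖^2) * J ≤ m * ‖h‖^2 := by
    rcases eq_or_lt_of_le hC2 with hC2e | hC2p
    · have hm0 : m = 0 := by rw [hmdef, ← hC2e, Real.sqrt_zero]
      rw [hm0, ← hC2e]
      simp
    · have hmpos : 0 < m := Real.sqrt_pos.2 hC2p
      have hJnn : 0 ≤ J := setIntegral_nonneg measurableSet_Ioc
        (fun s _ => (Real.exp_pos _).le)
      have h2mJ : 2*m*J ≤ 1 := by
        have := intExp (2*m) t ht
        have heq : (2*m)*J = 1 - Real.exp (-(2*m*t)) := by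
          rw [hJdef, ← integral_const_mul]
          convert this using 2 with s
        nlinarith [Real.exp_pos (-(2*m*t))]
      have key : (2*m*J) * (m * ‖h‖^2) ≤ m * ‖h‖^2 :=
        mul_le_of_le_one_left (by positivity) h2mJ
      have heq2 : ((C2 + m^2) * ‖h‖^2) * J = (2*m*J) * (m * ‖h‖^2) := by
        rw [← hm2]; ring
      rw [heq2]; exact key
  -- assemble
  have hup : uT f (x+h) t ≤ ∫ s in Set.Ioc (0:ℝ) t, fCost f (x+h) αp s := by
    rw [uT_eq]
    exact csInf_le (Sset_bdd f hlo t ht _) ⟨αp, hαp, hintp, rfl⟩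
  have hum : uT f (x-h) t ≤ ∫ s in Set.Ioc (0:ℝ) t, fCost f (x-h) αm s := by
    rw [uT_eq]
    exact csInf_le (Sset_bdd f hlo t ht _) ⟨αm, hαm, hintm, rfl⟩
  have hmk : m * ‖h‖^2 ≤ K * ‖h‖^2 := mul_le_mul_of_nonneg_right hmK (sq_nonneg _)
  linarith
end

section
/- Assume (A). Then u(x̄,t) = f̲ · t for every x̄ ∈ 𝔐 and t ≥ 0, and for all x ∈ ℝⁿ and t > 0 one has |u(x,t)/t − f̲| ≤ √(4‖f‖∞) · dist(x,𝔐) / t; consequently u(x,t)/t → f̲ locally uniformly on ℝⁿ as t → +∞. -/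
open MeasureTheory Filter Metric Set Topology

section helpers
variable {n : ℕ}

lemma fcost_zero (f : Euc n → ℝ) (x : Euc n) (s : ℝ) : fCost f x (fun _ => 0) s = f x := by
  simp [fCost, traj]

lemma mem_uTset (f : Euc n → ℝ) (x : Euc n) (t : ℝ) (ht : 0 ≤ t) :
    f x * t ∈ {c : ℝ | ∃ α : ℝ → Euc n, Measurable α ∧
      IntegrableOn (fCost f x α) (Set.Ioc 0 t) volume ∧
      c = ∫ s in Set.Ioc (0 : ℝ) t, fCost f x α s} := by
  refine ⟨fun _ => 0, measurable_const, ?_, ?_⟩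
  · have h : fCost f x (fun _ => 0) = fun _ => f x := funext (fcost_zero f x)
    rw [h]
    exact integrableOn_const (by simp [Real.volume_Ioc])
  · have h : fCost f x (fun _ => 0) = fun _ => f x := funext (fcost_zero f x)
    rw [h, setIntegral_const, measureReal_def, Real.volume_Ioc, ENNReal.toReal_ofReal (by linarith),
      smul_eq_mul, mul_comm, sub_zero]

lemma lbS (f : Euc n → ℝ) (x : Euc n) {flo : ℝ} (hlo : ∀ z, flo ≤ f z) (t : ℝ) (ht : 0 ≤ t) :
    ∀ c ∈ {c : ℝ | ∃ α : ℝ → Euc n, Measurable α ∧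
      IntegrableOn (fCost f x α) (Set.Ioc 0 t) volume ∧
      c = ∫ s in Set.Ioc (0 : ℝ) t, fCost f x α s}, flo * t ≤ c := by
  rintro c ⟨α, hm, hint, rfl⟩
  have h1 : flo * t = ∫ _ in Set.Ioc (0:ℝ) t, flo := by
    rw [setIntegral_const, measureReal_def, Real.volume_Ioc, ENNReal.toReal_ofReal (by linarith),
      smul_eq_mul, mul_comm, sub_zero]
  rw [h1]
  refine setIntegral_mono_on (integrableOn_const (by simp [Real.volume_Ioc]))
    hint measurableSet_Ioc ?_
  intro s _
  have h2 : (0:ℝ) ≤ (1/2) * ‖α s‖^2 := by positivity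
  simp only [fCost]
  nlinarith [hlo (traj x α s)]

lemma uT_lb (f : Euc n → ℝ) (x : Euc n) {flo : ℝ} (hlo : ∀ z, flo ≤ f z) (t : ℝ) (ht : 0 ≤ t) :
    flo * t ≤ uT f x t :=
  le_csInf ⟨_, mem_uTset f x t ht⟩ (lbS f x hlo t ht)

lemma uT_le (f : Euc n → ℝ) (x : Euc n) {flo : ℝ} (hlo : ∀ z, flo ≤ f z) (t : ℝ) (ht : 0 ≤ t)
    {c : ℝ} (hc : c ∈ {c : ℝ | ∃ α : ℝ → Euc n, Measurable α ∧
      IntegrableOn (fCost f x α) (Set.Ioc 0 t) volume ∧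
      c = ∫ s in Set.Ioc (0 : ℝ) t, fCost f x α s}) : uT f x t ≤ c :=
  csInf_le ⟨flo * t, lbS f x hlo t ht⟩ hc

lemma key_mem (f : Euc n → ℝ) (M : ℝ) (hcont : Continuous f)
    (hM : ∀ z, |f z| ≤ M) (x xb : Euc n) (t τ : ℝ)
    (ht : 0 < t) (hτ : 0 < τ) (hτt : τ ≤ t) :
    ∃ c ∈ {c : ℝ | ∃ α : ℝ → Euc n, Measurable α ∧
      IntegrableOn (fCost f x α) (Set.Ioc 0 t) volume ∧
      c = ∫ s in Set.Ioc (0 : ℝ) t, fCost f x α s},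
    c ≤ ((1/2) * ‖xb - x‖^2 / τ^2 + M) * τ + f xb * (t - τ) := by
  set v : Euc n := xb - x with hv
  set α : ℝ → Euc n := fun s => if s ≤ τ then τ⁻¹ • v else 0 with hα
  have hαm : Measurable α := Measurable.ite measurableSet_Iic measurable_const measurable_const
  have hint1 : ∀ a b : ℝ, a ≤ b → IntegrableOn α (Set.Ioc a b) volume := by
    intro a b hab
    have hb : ∀ s : ℝ, ‖α s‖ ≤ ‖τ⁻¹ • v‖ := by
      intro s; by_cases h : s ≤ τ <;> simp [hα, h]
    exact Integrable.mono' (integrableOn_const (by simp [Real.volume_Ioc]))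
      hαm.aestronglyMeasurable (Filter.Eventually.of_forall hb)
  have hInt : ∀ s : ℝ, 0 ≤ s → s ≤ t → (∫ r in Set.Ioc (0:ℝ) s, α r) = (min s τ) • (τ⁻¹ • v) := by
    intro s hs hst
    by_cases h : s ≤ τ
    · rw [setIntegral_congr_fun measurableSet_Ioc
        (fun r hr => if_pos (le_trans hr.2 h) : Set.EqOn α (fun _ => τ⁻¹ • v) (Set.Ioc 0 s)),
        setIntegral_const, measureReal_def, Real.volume_Ioc, ENNReal.toReal_ofReal (by linarith), sub_zero,
        min_eq_left h]
    · push_neg at h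
      have hsplit : Set.Ioc (0:ℝ) s = Set.Ioc 0 τ ∪ Set.Ioc τ s :=
        (Set.Ioc_union_Ioc_eq_Ioc (le_of_lt hτ) (le_of_lt h)).symm
      rw [hsplit, setIntegral_union (Set.Ioc_disjoint_Ioc_of_le le_rfl) measurableSet_Ioc
        (hint1 0 τ (le_of_lt hτ)) (hint1 τ s (le_of_lt h))]
      have e1 : (∫ r in Set.Ioc (0:ℝ) τ, α r) = τ • (τ⁻¹ • v) := by
        rw [setIntegral_congr_fun measurableSet_Ioc
          (fun r hr => if_pos hr.2 : Set.EqOn α (fun _ => τ⁻¹ • v) (Set.Ioc 0 τ)),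
          setIntegral_const, measureReal_def, Real.volume_Ioc, ENNReal.toReal_ofReal (by linarith), sub_zero]
      have e2 : (∫ r in Set.Ioc τ s, α r) = 0 := by
        rw [setIntegral_congr_fun measurableSet_Ioc
          (fun r hr => if_neg (not_le.2 hr.1) : Set.EqOn α (fun _ => (0:Euc n)) (Set.Ioc τ s)),
          integral_zero]
      rw [e1, e2, add_zero, min_eq_right (le_of_lt h)]
  have hτv : τ • (τ⁻¹ • v) = v := by
    rw [smul_smul, mul_inv_cancel₀ (ne_of_gt hτ), one_smul]
  have htraj : ∀ s ∈ Set.Ioc (0:ℝ) t, traj x α s = x + (min s τ) • (τ⁻¹ • v) := by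
    intro s hs
    rw [traj, hInt s (le_of_lt hs.1) hs.2]
  have hg : Continuous (fun s : ℝ => f (x + (min s τ) • (τ⁻¹ • v))) :=
    hcont.comp (continuous_const.add (((continuous_id.min continuous_const)).smul continuous_const))
  have hfm : Measurable (fun s : ℝ => (1/2) * ‖α s‖^2 + f (x + (min s τ) • (τ⁻¹ • v))) :=
    ((measurable_const.mul ((hαm.norm).pow measurable_const)).add hg.measurable)
  have hbound : ∀ s : ℝ, ‖(1/2) * ‖α s‖^2 + f (x + (min s τ) • (τ⁻¹ • v))‖
      ≤ (1/2) * ‖τ⁻¹ • v‖^2 + M := by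
    intro s
    have h1 : ‖α s‖ ≤ ‖τ⁻¹ • v‖ := by
      by_cases h : s ≤ τ <;> simp [hα, h]
    have h2 := hM (x + (min s τ) • (τ⁻¹ • v))
    have h3 : (0:ℝ) ≤ ‖α s‖ := norm_nonneg _
    rw [Real.norm_eq_abs, abs_le]
    constructor <;> nlinarith [abs_le.1 h2, norm_nonneg (τ⁻¹ • v)]
  have hgint : IntegrableOn (fun s : ℝ => (1/2) * ‖α s‖^2 + f (x + (min s τ) • (τ⁻¹ • v)))
      (Set.Ioc 0 t) volume :=
    Integrable.mono' (integrableOn_const (by simp [Real.volume_Ioc]))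
      hfm.aestronglyMeasurable (Filter.Eventually.of_forall hbound)
  have heq : Set.EqOn (fun s : ℝ => (1/2) * ‖α s‖^2 + f (x + (min s τ) • (τ⁻¹ • v)))
      (fCost f x α) (Set.Ioc 0 t) := by
    intro s hs
    simp only [fCost, htraj s hs]
  have hfint : IntegrableOn (fCost f x α) (Set.Ioc 0 t) volume :=
    hgint.congr_fun heq measurableSet_Ioc
  refine ⟨_, ⟨α, hαm, hfint, rfl⟩, ?_⟩
  have hsplit : Set.Ioc (0:ℝ) t = Set.Ioc 0 τ ∪ Set.Ioc τ t :=
    (Set.Ioc_union_Ioc_eq_Ioc (le_of_lt hτ) hτt).symm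
  have hi1 : IntegrableOn (fCost f x α) (Set.Ioc 0 τ) volume :=
    hfint.mono_set (by rw [hsplit]; exact Set.subset_union_left)
  have hi2 : IntegrableOn (fCost f x α) (Set.Ioc τ t) volume :=
    hfint.mono_set (by rw [hsplit]; exact Set.subset_union_right)
  rw [hsplit, setIntegral_union (Set.Ioc_disjoint_Ioc_of_le le_rfl) measurableSet_Ioc hi1 hi2]
  have b1 : (∫ s in Set.Ioc (0:ℝ) τ, fCost f x α s) ≤ ((1/2) * ‖v‖^2 / τ^2 + M) * τ := by
    have hc : ((1/2) * ‖v‖^2 / τ^2 + M) * τ = ∫ _ in Set.Ioc (0:ℝ) τ, ((1/2) * ‖v‖^2 / τ^2 + M) := by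
      rw [setIntegral_const, measureReal_def, Real.volume_Ioc, ENNReal.toReal_ofReal (by linarith), sub_zero,
        smul_eq_mul, mul_comm]
    rw [hc]
    refine setIntegral_mono_on hi1 (integrableOn_const (by simp [Real.volume_Ioc]))
      measurableSet_Ioc ?_
    intro s hs
    have hαs : α s = τ⁻¹ • v := if_pos hs.2
    have h2 := hM (traj x α s)
    have hn : ‖α s‖^2 = ‖v‖^2 / τ^2 := by
      rw [hαs, norm_smul, mul_pow, Real.norm_eq_abs, abs_inv, abs_of_pos hτ]
      field_simp
    simp only [fCost, hn]
    have h4 := (abs_le.1 h2).2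
    have hr : (1:ℝ)/2 * (‖v‖^2/τ^2) = 1/2 * ‖v‖^2/τ^2 := by ring
    linarith
  have b2 : (∫ s in Set.Ioc τ t, fCost f x α s) = f xb * (t - τ) := by
    have heq2 : Set.EqOn (fCost f x α) (fun _ => f xb) (Set.Ioc τ t) := by
      intro s hs
      have hαs : α s = 0 := if_neg (not_le.2 hs.1)
      have htr := htraj s ⟨lt_trans hτ hs.1, hs.2⟩
      rw [min_eq_right (le_of_lt hs.1), hτv] at htr
      simp only [fCost, htr, hαs, norm_zero]
      have hxv : x + v = xb := by rw [hv]; abel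
      rw [hxv]; ring
    rw [setIntegral_congr_fun measurableSet_Ioc heq2, setIntegral_const, measureReal_def, Real.volume_Ioc,
      ENNReal.toReal_ofReal (by linarith), smul_eq_mul, mul_comm]
  rw [b2]
  exact add_le_add_left b1 _

end helpers

/-- under assumptions (A), `u(x̄,t) = flo·t` on the argmin set,
`|u(x,t)/t - flo| ≤ √(4‖f‖∞) dist(x,𝔐)/t` for `t > 0`, and `u(·,t)/t → flo`
locally uniformly as `t → +∞`. -/
theorem stmt7 {n : ℕ} (f : Euc n → ℝ) (flo fhi : ℝ)
    (hcont : Continuous f) (hlo : ∀ x, flo ≤ f x) (hhi : ∀ x, f x ≤ fhi)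
    (hattain : ∃ x, f x = flo) :
    (∀ x ∈ {z : Euc n | f z = flo}, ∀ t : ℝ, 0 ≤ t → uT f x t = flo * t) ∧
    (∀ x : Euc n, ∀ t : ℝ, 0 < t →
      |uT f x t / t - flo| ≤
        Real.sqrt (4 * supNorm f) * Metric.infDist x {z : Euc n | f z = flo} / t) ∧
    TendstoLocallyUniformly (fun (t : ℝ) (x : Euc n) => uT f x t / t)
      (fun _ => flo) atTop := by
  -- basic facts
  obtain ⟨x0, hx0⟩ := hattain
  have hMabs : ∀ z, |f z| ≤ supNorm f := by
    have hbdd : BddAbove (Set.range fun z : Euc n => |f z|) := by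
      refine ⟨max |flo| |fhi|, ?_⟩
      rintro y ⟨z, rfl⟩
      rcases abs_le.1 (le_refl |f z|) with _
      rw [abs_le]
      constructor
      · have := hlo z
        have h1 : -max |flo| |fhi| ≤ -|flo| := neg_le_neg (le_max_left _ _)
        have h2 : -|flo| ≤ flo := neg_abs_le flo
        linarith
      · have := hhi z
        have h1 : |fhi| ≤ max |flo| |fhi| := le_max_right _ _
        have h2 : fhi ≤ |fhi| := le_abs_self fhi
        linarith
    intro z
    exact le_ciSup hbdd z
  set M : ℝ := supNorm f with hMdef
  have hM0 : 0 ≤ M := (abs_nonneg _).trans (hMabs x0)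
  have hpart1 : ∀ x ∈ {z : Euc n | f z = flo}, ∀ t : ℝ, 0 ≤ t → uT f x t = flo * t := by
    intro x hx t ht
    refine le_antisymm ?_ (uT_lb f x hlo t ht)
    have := uT_le f x hlo t ht (mem_uTset f x t ht)
    rwa [hx] at this
  set S : Set (Euc n) := {z : Euc n | f z = flo} with hSdef
  have hScl : IsClosed S := isClosed_eq hcont continuous_const
  have hSne : S.Nonempty := ⟨x0, hx0⟩
  have hpart2 : ∀ x : Euc n, ∀ t : ℝ, 0 < t →
      |uT f x t / t - flo| ≤ Real.sqrt (4 * M) * Metric.infDist x S / t := by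
    intro x t ht
    obtain ⟨xb, hxbS, hdd⟩ := hScl.exists_infDist_eq_dist hSne x
    have hxb : f xb = flo := hxbS
    set d : ℝ := Metric.infDist x S with hddef
    have hnorm : ‖xb - x‖ = d := by rw [hdd, dist_eq_norm, norm_sub_rev]
    have hlb : flo * t ≤ uT f x t := uT_lb f x hlo t (le_of_lt ht)
    have habs : |uT f x t / t - flo| = uT f x t / t - flo := by
      rw [abs_of_nonneg]
      rw [sub_nonneg, le_div_iff₀ ht]
      linarith
    rw [habs]
    have hd0 : 0 ≤ d := Metric.infDist_nonneg
    rcases eq_or_lt_of_le hd0 with hd | hd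
    · -- d = 0 : x ∈ S
      have hxxb : x = xb := by
        have : dist x xb = 0 := by rw [← hdd, ← hd]
        exact dist_eq_zero.1 this
      have hxS : x ∈ S := by rw [hxxb]; exact hxbS
      have he := hpart1 x hxS t (le_of_lt ht)
      have hgoal : flo * t / t - flo = 0 := by field_simp; ring
      rw [he, hgoal, ← hd, mul_zero, zero_div]
    · -- d > 0
      have hMpos : 0 < M := by
        rcases eq_or_lt_of_le hM0 with h0 | h0
        · exfalso
          have h1 : |f x| ≤ 0 := by rw [h0]; exact hMabs x
          have h2 : |f xb| ≤ 0 := by rw [h0]; exact hMabs xb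
          have h3 : f x = flo := by
            have := abs_nonpos_iff.1 h1
            have := abs_nonpos_iff.1 h2
            rw [hxb] at *
            linarith [abs_nonpos_iff.1 h1, abs_nonpos_iff.1 h2]
          have : x ∈ S := h3
          have : d = 0 := by rw [hddef]; exact Metric.infDist_zero_of_mem this
          linarith
        · exact h0
      set s : ℝ := Real.sqrt M with hsdef
      have hs : 0 < s := Real.sqrt_pos.2 hMpos
      have hs2 : s^2 = M := Real.sq_sqrt hM0
      have h4M : Real.sqrt (4 * M) = 2 * s := by
        rw [show (4:ℝ) * M = 2^2 * M by ring, Real.sqrt_mul (by positivity), hsdef,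
          Real.sqrt_sq (by norm_num)]
      rw [h4M]
      set τ : ℝ := d / (2 * s) with hτdef
      have hτpos : 0 < τ := by positivity
      have hfloM : -M ≤ flo := by
        have := (abs_le.1 (hMabs xb)).1
        rw [hxb] at this
        linarith
      rcases le_or_gt τ t with hτt | hτt
      · obtain ⟨c, hcmem, hcle⟩ := key_mem f M hcont hMabs x xb t τ ht hτpos hτt
        have h1 : uT f x t ≤ c := uT_le f x hlo t (le_of_lt ht) hcmem
        rw [hnorm, hxb] at hcle
        have hcle2 : c ≤ 2 * s * d + flo * t := by
          have hτ2 : ((1:ℝ)/2 * d^2 / τ^2 + M) * τ + flo * (t - τ) = (3/2) * s * d + (-flo) * (d / (2*s)) + flo * t := by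
            rw [hτdef, ← hs2]
            field_simp
            ring
          rw [hτ2] at hcle
          have hmul : (-flo) * (d / (2*s)) ≤ s^2 * (d / (2*s)) :=
            mul_le_mul_of_nonneg_right (by linarith [hs2]) (by positivity)
          have he2 : s^2 * (d / (2*s)) = s * d / 2 := by field_simp
          linarith
        rw [sub_le_iff_le_add, div_le_iff₀ ht]
        calc uT f x t ≤ c := h1
          _ ≤ 2 * s * d + flo * t := hcle2
          _ = (2 * s * d / t + flo) * t := by field_simp
      · -- t < τ : crude bound
        have h1 : uT f x t ≤ f x * t := uT_le f x hlo t (le_of_lt ht) (mem_uTset f x t (le_of_lt ht))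
        have h2 : uT f x t / t - flo ≤ f x - flo := by
          rw [sub_le_sub_iff_right, div_le_iff₀ ht]
          exact h1
        have h3 : f x - flo ≤ 2 * M := by
          have := (abs_le.1 (hMabs x)).2
          linarith
        have h4 : 2 * s * t < d := by
          have := (lt_div_iff₀ (by positivity : (0:ℝ) < 2 * s)).1 (by rw [← hτdef]; exact hτt)
          linarith
        have h5 : 2 * M ≤ 2 * s * d / t := by
          rw [le_div_iff₀ ht]
          nlinarith
        linarith
  refine ⟨hpart1, hpart2, ?_⟩
  rw [tendstoLocallyUniformly_iff_forall_isCompact]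
  intro K hK
  rw [Metric.tendstoUniformlyOn_iff]
  intro ε hε
  have hCex : ∃ C : ℝ, ∀ x ∈ K, Metric.infDist x S ≤ C := by
    rcases K.eq_empty_or_nonempty with h | h
    · exact ⟨0, by simp [h]⟩
    · obtain ⟨z, hz, hmax⟩ := hK.exists_isMaxOn h ((continuous_infDist_pt S).continuousOn)
      exact ⟨Metric.infDist z S, hmax⟩
  obtain ⟨C, hC⟩ := hCex
  filter_upwards [eventually_gt_atTop (max 0 (Real.sqrt (4 * M) * C / ε))] with t htt
  intro x hxK
  have ht : 0 < t := lt_of_le_of_lt (le_max_left _ _) htt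
  have ht2 : Real.sqrt (4 * M) * C / ε < t := lt_of_le_of_lt (le_max_right _ _) htt
  have hb := hpart2 x t ht
  rw [Real.dist_eq, abs_sub_comm]
  have hsq : 0 ≤ Real.sqrt (4 * M) := Real.sqrt_nonneg _
  have hmono : Real.sqrt (4 * M) * Metric.infDist x S / t ≤ Real.sqrt (4 * M) * C / t := by
    gcongr
    exact hC x hxK
  have hfin : Real.sqrt (4 * M) * C / t < ε := by
    rw [div_lt_iff₀ ht]
    have := (div_lt_iff₀ hε).1 ht2
    linarith
  calc |uT f x t / t - flo| ≤ Real.sqrt (4 * M) * Metric.infDist x S / t := hb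
    _ ≤ Real.sqrt (4 * M) * C / t := hmono
    _ < ε := hfin
end

section
/- Under assumption (F), for every x ∈ ℝⁿ there exists an optimal control: a measurable α* : [0,∞) → ℝⁿ with |α*(s)| ≤ 1 a.e. such that ∫₀^{t_x(α*)} ℓ(y_x^{α*}(s)) ds = v(x), i.e. the infimum defining v(x) is attained. -/
open MeasureTheory Filter Metric Set Topology
open scoped ENNReal

noncomputable section

variable {n : ℕ}

/-- An admissible control: measurable with `‖α s‖ ≤ 1` for a.e. `s ≥ 0`. -/
def Admissible (α : ℝ → Euc n) : Prop :=
  Measurable α ∧ ∀ᵐ s ∂(volume : Measure ℝ), 0 ≤ s → ‖α s‖ ≤ 1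

/-- Hitting time `t_x(α) = inf {s ≥ 0 : y_x^α(s) ∈ M}` (`∞` if the set is empty). -/
def hitTime (M : Set (Euc n)) (x : Euc n) (α : ℝ → Euc n) : ℝ≥0∞ :=
  ⨅ (s : ℝ) (_ : 0 ≤ s) (_ : traj x α s ∈ M), ENNReal.ofReal s

/-- Cost `∫₀^{t_x(α)} ℓ(y_x^α(s)) ds` of a control (as an extended real, `ℓ ≥ 0`). -/
def cost (M : Set (Euc n)) (l : Euc n → ℝ) (x : Euc n) (α : ℝ → Euc n) : ℝ≥0∞ :=
  ∫⁻ s in {s : ℝ | 0 < s ∧ ENNReal.ofReal s < hitTime M x α},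
    ENNReal.ofReal (l (traj x α s))

/-- The value function (extended-real valued). -/
def valE (M : Set (Euc n)) (l : Euc n → ℝ) (x : Euc n) : ℝ≥0∞ :=
  ⨅ (α : ℝ → Euc n) (_ : Admissible α), cost M l x α

/-- The value function `v`. -/
def val (M : Set (Euc n)) (l : Euc n → ℝ) (x : Euc n) : ℝ := (valE M l x).toReal

/-- A control is optimal for `x` if it is admissible and attains the infimum. -/
def IsOptimal (M : Set (Euc n)) (l : Euc n → ℝ) (x : Euc n) (α : ℝ → Euc n) : Prop :=
  Admissible α ∧ cost M l x α = valE M l x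

/-- The viscosity subdifferential `D⁻v(z)`. -/
def subDiff (v : Euc n → ℝ) (z : Euc n) : Set (Euc n) :=
  {p | ∀ ε > 0, ∀ᶠ x in 𝓝 z, v z + (inner ℝ p (x - z) : ℝ) - ε * ‖x - z‖ ≤ v x}

/-- The viscosity superdifferential `D⁺v(z)`. -/
def superDiff (v : Euc n → ℝ) (z : Euc n) : Set (Euc n) :=
  {p | ∀ ε > 0, ∀ᶠ x in 𝓝 z, v x ≤ v z + (inner ℝ p (x - z) : ℝ) + ε * ‖x - z‖}

/-- The set of limiting gradients `D*v(z)`. -/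
def limGrad (v : Euc n → ℝ) (z : Euc n) : Set (Euc n) :=
  {p | ∃ u : ℕ → Euc n, (∀ k, DifferentiableAt ℝ v (u k)) ∧
    Tendsto u atTop (𝓝 z) ∧ Tendsto (fun k => gradient v (u k)) atTop (𝓝 p)}

/-- Distance of the trajectory to the target, with the trajectory extended so that it
remains in `M` after the hitting time. -/
def extDist (M : Set (Euc n)) (x : Euc n) (α : ℝ → Euc n) (t : ℝ) : ℝ :=
  if ENNReal.ofReal t < hitTime M x α then Metric.infDist (traj x α t) M else 0

end
section Aux

open intervalIntegral

variable {n : ℕ}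

lemma traj_of_nonpos (x : Euc n) (α : ℝ → Euc n) {t : ℝ} (ht : t ≤ 0) : traj x α t = x := by
  simp [traj, Set.Ioc_eq_empty (not_lt.2 ht)]

lemma intInt (α : ℝ → Euc n) (hm : Measurable α) (hb : ∀ s, ‖α s‖ ≤ 1) (a b : ℝ) :
    IntervalIntegrable α volume a b := by
  apply IntervalIntegrable.mono_fun' (g := fun _ => (1:ℝ))
  · exact intervalIntegrable_const
  · exact hm.aestronglyMeasurable
  · exact Filter.Eventually.of_forall hb

lemma traj_eq (x : Euc n) (α : ℝ → Euc n) (t : ℝ) :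
    traj x α t = x + ∫ s in (0:ℝ)..(max t 0), α s := by
  rcases le_or_gt t 0 with h | h
  · rw [traj_of_nonpos x α h, max_eq_right h]
    simp
  · rw [max_eq_left h.le, traj, intervalIntegral.integral_of_le h.le]

lemma lipschitz_traj (x : Euc n) (α : ℝ → Euc n) (hm : Measurable α) (hb : ∀ s, ‖α s‖ ≤ 1) :
    LipschitzWith 1 (traj x α) := by
  apply LipschitzWith.of_dist_le_mul
  intro t t'
  rw [traj_eq x α t, traj_eq x α t', dist_eq_norm]
  have h1 : (∫ s in (0:ℝ)..(max t 0), α s) - ∫ s in (0:ℝ)..(max t' 0), α s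
      = ∫ s in (max t' 0)..(max t 0), α s := by
    exact intervalIntegral.integral_interval_sub_left (intInt α hm hb 0 _) (intInt α hm hb 0 _)
  have h2 : ‖∫ s in (max t' 0)..(max t 0), α s‖ ≤ 1 * |max t 0 - max t' 0| :=
    intervalIntegral.norm_integral_le_of_norm_le_const (fun s _ => hb s)
  calc ‖x + (∫ s in (0:ℝ)..(max t 0), α s) - (x + ∫ s in (0:ℝ)..(max t' 0), α s)‖
      = ‖(∫ s in (0:ℝ)..(max t 0), α s) - ∫ s in (0:ℝ)..(max t' 0), α s‖ := by
        rw [add_sub_add_left_eq_sub]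
    _ ≤ 1 * |max t 0 - max t' 0| := by rw [h1]; exact h2
    _ ≤ 1 * dist t t' := by
        rw [one_mul, one_mul, Real.dist_eq]
        exact abs_max_sub_max_le_abs _ _ _

lemma hitTime_le {M : Set (Euc n)} {x : Euc n} {α : ℝ → Euc n} {s : ℝ} (hs : 0 ≤ s)
    (hmem : traj x α s ∈ M) : hitTime M x α ≤ ENNReal.ofReal s := by
  exact iInf_le_of_le s (by simp [hs, hmem])

lemma exists_hit {M : Set (Euc n)} (hMcl : IsClosed M) {x : Euc n} {α : ℝ → Euc n}
    (hcont : Continuous (traj x α)) {c : ℝ} (hc : 0 ≤ c)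
    (h : hitTime M x α ≤ ENNReal.ofReal c) : ∃ t, 0 ≤ t ∧ t ≤ c ∧ traj x α t ∈ M := by
  set S : Set ℝ := {s | 0 ≤ s ∧ traj x α s ∈ M} with hS
  have hScl : IsClosed S := (isClosed_Ici.preimage continuous_id).inter (hMcl.preimage hcont)
  have hSne : S.Nonempty := by
    by_contra hne
    have : hitTime M x α = ⊤ := by
      rw [hitTime, iInf_eq_top]
      intro s
      rw [iInf_eq_top]; intro hs; rw [iInf_eq_top]; intro hm
      exact absurd ⟨s, hs, hm⟩ hne
    rw [this] at h
    exact absurd (top_le_iff.1 h) (by simp)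
  have hbdd : BddBelow S := ⟨0, fun s hs => hs.1⟩
  have hmem : sInf S ∈ S := hScl.csInf_mem hSne hbdd
  refine ⟨sInf S, hmem.1, ?_, hmem.2⟩
  have h2 : ENNReal.ofReal (sInf S) ≤ hitTime M x α := by
    rw [hitTime]
    refine le_iInf fun s => le_iInf fun hs => le_iInf fun hm => ?_
    exact ENNReal.ofReal_le_ofReal (csInf_le hbdd ⟨hs, hm⟩)
  have := h2.trans h
  rwa [ENNReal.ofReal_le_ofReal_iff hc] at this

lemma norm_deriv_le {f : ℝ → Euc n} (hf : LipschitzWith 1 f) (s : ℝ) : ‖deriv f s‖ ≤ 1 := by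
  by_cases h : DifferentiableAt ℝ f s
  · have h1 : ‖fderiv ℝ f s‖ ≤ 1 := by
      simpa using norm_fderiv_le_of_lipschitz ℝ hf (x₀ := s)
    calc ‖deriv f s‖ = ‖fderiv ℝ f s 1‖ := by rw [← fderiv_apply_one_eq_deriv]
      _ ≤ ‖fderiv ℝ f s‖ * ‖(1:ℝ)‖ := (fderiv ℝ f s).le_opNorm 1
      _ ≤ 1 := by simpa using h1
  · simp [deriv_zero_of_not_differentiableAt h]

lemma slope_lim {f : ℝ → Euc n} {s c : ℝ} {L : Euc n} (h : HasDerivAt f L s)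
    (hc : ∀ m : ℕ, 0 < c / (m+1)) :
    Tendsto (fun m : ℕ => ((c/(m+1)))⁻¹ • (f (s + c/(m+1)) - f s)) atTop (𝓝 L) := by
  have hslope := hasDerivAt_iff_tendsto_slope.1 h
  have htend : Tendsto (fun m : ℕ => s + c/(m+1)) atTop (𝓝[≠] s) := by
    apply tendsto_nhdsWithin_of_tendsto_nhds_of_eventually_within
    · have : Tendsto (fun m : ℕ => c/(m+1)) atTop (𝓝 0) := by
        simpa [div_eq_mul_inv] using tendsto_one_div_add_atTop_nhds_zero_nat.const_mul c
      simpa using tendsto_const_nhds.add this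
    · exact Eventually.of_forall fun m => by
        simp only [Set.mem_compl_iff, Set.mem_singleton_iff]
        have := hc m; intro hh; nlinarith
  have := hslope.comp htend
  convert this using 2 with m
  simp [slope_def_module]

lemma lipschitz_ftc {f : ℝ → Euc n} (hf : LipschitzWith 1 f) {T : ℝ} (hT : 0 ≤ T) :
    ∫ s in (0:ℝ)..T, deriv f s = f T - f 0 := by
  clear hT
  have hcont : Continuous f := hf.continuous
  have hfint : ∀ a b : ℝ, IntervalIntegrable f volume a b := fun a b =>
    hcont.intervalIntegrable a b
  have hpos : ∀ m : ℕ, 0 < (1:ℝ)/(m+1) := fun m => by positivity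
  set h : ℕ → ℝ := fun m => 1/(m+1) with hh
  set G : ℝ → Euc n := fun v => ∫ s in (0:ℝ)..v, f s with hG
  have hc2 : ∀ c : ℝ, Continuous fun s : ℝ => f (s + c) := fun c =>
    hcont.comp (continuous_id.add continuous_const)
  have hGd : ∀ u : ℝ, HasDerivAt G (f u) u := fun u =>
    intervalIntegral.integral_hasDerivAt_right (hfint 0 u)
      (hcont.stronglyMeasurable.stronglyMeasurableAtFilter) hcont.continuousAt
  have key1 : Tendsto (fun m : ℕ => ∫ s in (0:ℝ)..T, (h m)⁻¹ • (f (s + h m) - f s)) atTop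
      (𝓝 (∫ s in (0:ℝ)..T, deriv f s)) := by
    apply intervalIntegral.tendsto_integral_filter_of_dominated_convergence
      (bound := fun _ => (1:ℝ))
    · exact Eventually.of_forall fun m =>
        (show Continuous (fun s => (h m)⁻¹ • (f (s + h m) - f s)) from
        by fun_prop).aestronglyMeasurable
    · refine Eventually.of_forall fun m => Eventually.of_forall fun s _ => ?_
      rw [norm_smul]
      have hd : ‖f (s + h m) - f s‖ ≤ 1 * |h m| := by
        rw [← dist_eq_norm]
        calc dist (f (s + h m)) (f s) ≤ 1 * dist (s + h m) s := hf.dist_le_mul _ _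
          _ = 1 * |h m| := by simp [Real.dist_eq]
      have hm0 : 0 < h m := hpos m
      calc ‖(h m)⁻¹‖ * ‖f (s + h m) - f s‖ ≤ (h m)⁻¹ * (1 * h m) := by
            apply mul_le_mul
            · rw [Real.norm_eq_abs, abs_of_pos (by positivity)]
            · simpa [abs_of_pos hm0] using hd
            · positivity
            · positivity
        _ = 1 := by field_simp
    · exact intervalIntegrable_const
    · filter_upwards [hf.ae_differentiableAt] with s hs _
      exact slope_lim hs.hasDerivAt hpos
  have key2 : ∀ m : ℕ, (∫ s in (0:ℝ)..T, (h m)⁻¹ • (f (s + h m) - f s))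
      = (h m)⁻¹ • (G (T + h m) - G T) - (h m)⁻¹ • (G (0 + h m) - G 0) := by
    intro m
    rw [intervalIntegral.integral_smul, intervalIntegral.integral_sub
      ((hc2 (h m)).intervalIntegrable _ _) (hfint _ _),
      intervalIntegral.integral_comp_add_right]
    have a2 : G (T + h m) = G (0 + h m) + ∫ s in (0 + h m)..(T + h m), f s :=
      (intervalIntegral.integral_add_adjacent_intervals (hfint 0 (0 + h m))
        (hfint (0 + h m) (T + h m))).symm
    have a3 : G 0 = 0 := intervalIntegral.integral_same
    rw [← smul_sub]
    congr 1
    have : (∫ s in (0 + h m)..(T + h m), f s) = G (T + h m) - G (0 + h m) := by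
      rw [a2]; abel
    rw [this, a3]
    abel
  have key3 : Tendsto (fun m : ℕ => (h m)⁻¹ • (G (T + h m) - G T)
      - (h m)⁻¹ • (G (0 + h m) - G 0)) atTop (𝓝 (f T - f 0)) :=
    (slope_lim (hGd T) hpos).sub (slope_lim (hGd 0) hpos)
  exact tendsto_nhds_unique key1 (by simpa only [key2] using key3)

lemma exists_subseq_tendsto (x : Euc n) (y : ℕ → ℝ → Euc n)
    (hy : ∀ k, LipschitzWith 1 (y k)) (h0 : ∀ k, y k 0 = x) :
    ∃ (φ : ℕ → ℕ) (z : ℝ → Euc n), StrictMono φ ∧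
      ∀ t, Tendsto (fun k => y (φ k) t) atTop (𝓝 (z t)) := by
  set S : Set (ℚ → Euc n) := Set.pi Set.univ (fun q => closedBall x |(q : ℝ)|) with hS
  have hScpt : IsCompact S := isCompact_univ_pi fun q => isCompact_closedBall x _
  have hmem : ∀ k, (fun q : ℚ => y k (q : ℝ)) ∈ S := by
    intro k q _
    rw [mem_closedBall]
    calc dist (y k (q:ℝ)) x = dist (y k (q:ℝ)) (y k 0) := by rw [h0]
      _ ≤ 1 * dist (q:ℝ) 0 := (hy k).dist_le_mul _ _
      _ = |(q:ℝ)| := by rw [one_mul, Real.dist_eq, sub_zero]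
  obtain ⟨g, hgS, φ, hφ, hconv⟩ := hScpt.isSeqCompact (fun k => hmem k)
  have hconvq : ∀ q : ℚ, Tendsto (fun k => y (φ k) (q : ℝ)) atTop (𝓝 (g q)) := by
    intro q
    exact (continuous_apply q).continuousAt.tendsto.comp hconv
  have hcauchy : ∀ t : ℝ, CauchySeq (fun k => y (φ k) t) := by
    intro t
    rw [Metric.cauchySeq_iff]
    intro ε hε
    obtain ⟨q, hq⟩ := exists_rat_near t (by positivity : (0:ℝ) < ε/4)
    have : CauchySeq (fun k => y (φ k) (q : ℝ)) := (hconvq q).cauchySeq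
    rw [Metric.cauchySeq_iff] at this
    obtain ⟨N, hN⟩ := this (ε/4) (by positivity)
    refine ⟨N, fun a ha b hb => ?_⟩
    have l1 : ∀ k, dist (y (φ k) t) (y (φ k) (q:ℝ)) ≤ ε/4 := fun k => by
      calc dist (y (φ k) t) (y (φ k) (q:ℝ)) ≤ 1 * dist t (q:ℝ) := (hy _).dist_le_mul _ _
        _ ≤ ε/4 := by rw [one_mul, Real.dist_eq]; exact hq.le
    calc dist (y (φ a) t) (y (φ b) t)
        ≤ dist (y (φ a) t) (y (φ a) (q:ℝ)) + dist (y (φ a) (q:ℝ)) (y (φ b) (q:ℝ))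
          + dist (y (φ b) (q:ℝ)) (y (φ b) t) := dist_triangle4 _ _ _ _
      _ < ε/4 + ε/4 + ε/4 := by
          have := hN a ha b hb
          have l2 := l1 a
          have l3 := (l1 b)
          rw [dist_comm] at l3
          linarith
      _ < ε := by linarith
  choose z hz using fun t => cauchySeq_tendsto_of_complete (hcauchy t)
  exact ⟨φ, z, hφ, hz⟩

lemma cost_congr {M : Set (Euc n)} {l : Euc n → ℝ} {x : Euc n} {α α' : ℝ → Euc n}
    (h : traj x α = traj x α') : cost M l x α = cost M l x α' := by
  unfold cost hitTime
  rw [h]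

lemma measA (c : ℝ≥0∞) : MeasurableSet {s : ℝ | 0 < s ∧ ENNReal.ofReal s < c} := by
  rw [Set.setOf_and]
  exact (measurableSet_lt measurable_const measurable_id).inter
    (measurableSet_lt ENNReal.measurable_ofReal measurable_const)

lemma normCtrl (x : Euc n) (α : ℝ → Euc n) (hα : Admissible α) :
    ∃ β : ℝ → Euc n, Measurable β ∧ (∀ s, ‖β s‖ ≤ 1) ∧ traj x β = traj x α := by
  refine ⟨fun s => if ‖α s‖ ≤ 1 then α s else 0, ?_, ?_, ?_⟩
  · exact Measurable.ite (measurableSet_le (hα.1.norm) measurable_const) hα.1 measurable_const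
  · intro s
    by_cases h : ‖α s‖ ≤ 1 <;> simp [h]
  · funext t
    unfold traj
    congr 1
    apply setIntegral_congr_ae measurableSet_Ioc
    filter_upwards [hα.2] with s hs hmem
    rw [if_pos (hs hmem.1.le)]

end Aux
/-- under assumption (F), for every `x` there exists an optimal control,
i.e. an admissible control attaining the infimum defining the value function. -/
theorem stmt9 {n : ℕ} (M : Set (Euc n)) (l : Euc n → ℝ)
    (hMne : M.Nonempty) (hMcl : IsClosed M)
    (hlc : Continuous l) (hlbd : BddAbove (Set.range l))
    (hlpos : ∀ z ∉ M, 0 < l z) (hlzero : ∀ z ∈ M, l z = 0) :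
    ∀ x : Euc n, ∃ α : ℝ → Euc n, IsOptimal M l x α := by
  intro x
  have hadm0 : Admissible (fun _ : ℝ => (0 : Euc n)) :=
    ⟨measurable_const, Eventually.of_forall fun s _ => by simp⟩
  by_cases hV : valE M l x = ⊤
  · refine ⟨fun _ => 0, hadm0, ?_⟩
    have h1 : valE M l x ≤ cost M l x (fun _ => 0) := iInf₂_le _ hadm0
    rw [hV] at h1 ⊢
    exact top_le_iff.1 h1
  -- Main case: select a minimizing sequence of normCtrld controls.
  have hsel : ∀ k : ℕ, ∃ β : ℝ → Euc n, Measurable β ∧ (∀ s, ‖β s‖ ≤ 1) ∧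
      cost M l x β < valE M l x + ENNReal.ofReal (1/(k+1)) := by
    intro k
    have hne : ENNReal.ofReal (1/(k+1)) ≠ 0 := by
      rw [Ne, ENNReal.ofReal_eq_zero, not_le]
      positivity
    have hlt : valE M l x < valE M l x + ENNReal.ofReal (1/(k+1)) :=
      ENNReal.lt_add_right hV hne
    conv_lhs at hlt => rw [valE]
    obtain ⟨α, hα⟩ := iInf_lt_iff.1 hlt
    obtain ⟨hαadm, hαc⟩ := iInf_lt_iff.1 hα
    obtain ⟨β, hβm, hβb, hβtraj⟩ := normCtrl x α hαadm
    exact ⟨β, hβm, hβb, by rwa [cost_congr hβtraj]⟩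
  choose β hβm hβb hβc using hsel
  set y : ℕ → ℝ → Euc n := fun k => traj x (β k) with hy
  have hylip : ∀ k, LipschitzWith 1 (y k) := fun k => lipschitz_traj x (β k) (hβm k) (hβb k)
  have hy0 : ∀ k, y k 0 = x := fun k => traj_of_nonpos _ _ le_rfl
  obtain ⟨φ, z, hφ, hz⟩ := exists_subseq_tendsto x y hylip hy0
  have hzlip : LipschitzWith 1 z := LipschitzWith.of_dist_le_mul fun t t' =>
    le_of_tendsto ((hz t).dist (hz t'))
      (Eventually.of_forall fun k => (hylip _).dist_le_mul _ _)
  have hznonpos : ∀ t ≤ 0, z t = x := fun t ht =>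
    tendsto_nhds_unique (hz t)
      (by simpa [hy, traj_of_nonpos _ _ ht] using (tendsto_const_nhds : Tendsto (fun _ : ℕ => x) atTop (𝓝 x)))
  set γ : ℝ → Euc n := deriv z with hγ
  have hγb : ∀ s, ‖γ s‖ ≤ 1 := norm_deriv_le hzlip
  have hγadm : Admissible γ := ⟨measurable_deriv z, Eventually.of_forall fun s _ => hγb s⟩
  have htraj : traj x γ = z := by
    funext t
    rcases le_or_gt t 0 with ht | ht
    · rw [traj_of_nonpos _ _ ht, hznonpos t ht]
    · rw [traj, ← intervalIntegral.integral_of_le ht.le, hγ, lipschitz_ftc hzlip ht.le,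
        hznonpos 0 le_rfl]
      abel
  -- lower semicontinuity of the hitting time along the subsequence
  have claimA : ∀ s : ℝ, 0 ≤ s → ENNReal.ofReal s < hitTime M x γ →
      ∀ᶠ k in atTop, ENNReal.ofReal s < hitTime M x (β (φ k)) := by
    intro s hs hlt
    by_contra hcon
    rw [Filter.not_eventually] at hcon
    obtain ⟨ψ, hψ, hψle⟩ :=
      Filter.extraction_of_frequently_atTop (hcon.mono fun k hk => not_lt.1 hk)
    have hhits : ∀ j : ℕ, ∃ t, 0 ≤ t ∧ t ≤ s ∧ y (φ (ψ j)) t ∈ M := fun j =>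
      exists_hit hMcl (hylip _).continuous hs (hψle j)
    choose t ht0 hts htM using hhits
    obtain ⟨t0, ht0mem, θ, hθ, hθt⟩ :=
      (isCompact_Icc (a := (0:ℝ)) (b := s)).tendsto_subseq (fun j => ⟨ht0 j, hts j⟩)
    have hsub : Tendsto (fun j => y (φ (ψ (θ j))) t0) atTop (𝓝 (z t0)) :=
      (hz t0).comp ((hψ.comp hθ).tendsto_atTop)
    have hdist : Tendsto (fun j => dist (y (φ (ψ (θ j))) (t (θ j))) (z t0)) atTop (𝓝 0) := by
      apply squeeze_zero (fun _ => dist_nonneg)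
        (g := fun j => dist (t (θ j)) t0 + dist (y (φ (ψ (θ j))) t0) (z t0))
      · intro j
        calc dist (y (φ (ψ (θ j))) (t (θ j))) (z t0)
            ≤ dist (y (φ (ψ (θ j))) (t (θ j))) (y (φ (ψ (θ j))) t0)
              + dist (y (φ (ψ (θ j))) t0) (z t0) := dist_triangle _ _ _
          _ ≤ dist (t (θ j)) t0 + dist (y (φ (ψ (θ j))) t0) (z t0) := by
              gcongr
              simpa using (hylip (φ (ψ (θ j)))).dist_le_mul (t (θ j)) t0
      · have l1 : Tendsto (fun j => dist (t (θ j)) t0) atTop (𝓝 0) := by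
          simpa using hθt.dist (tendsto_const_nhds (x := t0))
        have l2 : Tendsto (fun j => dist (y (φ (ψ (θ j))) t0) (z t0)) atTop (𝓝 0) := by
          simpa using hsub.dist (tendsto_const_nhds (x := z t0))
        simpa using l1.add l2
    have hconv2 : Tendsto (fun j => y (φ (ψ (θ j))) (t (θ j))) atTop (𝓝 (z t0)) :=
      tendsto_iff_dist_tendsto_zero.2 hdist
    have hzt0 : z t0 ∈ M := hMcl.mem_of_tendsto hconv2 (Eventually.of_forall fun j => htM (θ j))
    have hle : hitTime M x γ ≤ ENNReal.ofReal t0 :=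
      hitTime_le ht0mem.1 (by rw [htraj]; exact hzt0)
    exact absurd hlt
      (not_lt.2 (hle.trans (ENNReal.ofReal_le_ofReal ht0mem.2)))
  -- Fatou argument
  set F : ℕ → ℝ → ℝ≥0∞ := fun k =>
    Set.indicator {s : ℝ | 0 < s ∧ ENNReal.ofReal s < hitTime M x (β (φ k))}
      (fun s => ENNReal.ofReal (l (y (φ k) s))) with hF
  have hFmeas : ∀ k, Measurable (F k) := fun k =>
    (ENNReal.measurable_ofReal.comp (hlc.measurable.comp (hylip (φ k)).continuous.measurable)).indicator
      (measA _)
  have hcost_eq : ∀ k, cost M l x (β (φ k)) = ∫⁻ s, F k s := fun k =>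
    (lintegral_indicator (measA _) _).symm
  have step1 : ∀ s : ℝ, Set.indicator {s : ℝ | 0 < s ∧ ENNReal.ofReal s < hitTime M x γ}
      (fun s => ENNReal.ofReal (l (z s))) s ≤ liminf (fun k => F k s) atTop := by
    intro s
    by_cases hsA : s ∈ {s : ℝ | 0 < s ∧ ENNReal.ofReal s < hitTime M x γ}
    · rw [Set.indicator_of_mem hsA]
      obtain ⟨hs0, hslt⟩ := hsA
      have hev : ∀ᶠ k in atTop, F k s = ENNReal.ofReal (l (y (φ k) s)) := by
        filter_upwards [claimA s hs0.le hslt] with k hk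
        exact Set.indicator_of_mem (Set.mem_setOf.2 ⟨hs0, hk⟩) _
      have htend : Tendsto (fun k => ENNReal.ofReal (l (y (φ k) s))) atTop
          (𝓝 (ENNReal.ofReal (l (z s)))) :=
        (ENNReal.continuous_ofReal.tendsto _).comp ((hlc.tendsto _).comp (hz s))
      have heq : liminf (fun k => F k s) atTop = ENNReal.ofReal (l (z s)) := by
        rw [liminf_congr hev]
        exact htend.liminf_eq
      exact heq.ge
    · rw [Set.indicator_of_notMem hsA]
      exact zero_le
  have hofReal_mono : ∀ k : ℕ, ENNReal.ofReal (1/((φ k : ℝ)+1)) ≤ ENNReal.ofReal (1/((k : ℝ)+1)) := by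
    intro k
    apply ENNReal.ofReal_le_ofReal
    apply one_div_le_one_div_of_le (by positivity)
    have : (k : ℝ) ≤ (φ k : ℝ) := Nat.cast_le.2 hφ.le_apply
    linarith
  have htendV : Tendsto (fun k : ℕ => valE M l x + ENNReal.ofReal (1/((k:ℝ)+1))) atTop
      (𝓝 (valE M l x)) := by
    have h0 : Tendsto (fun k : ℕ => ENNReal.ofReal (1/((k:ℝ)+1))) atTop (𝓝 0) := by
      have := ENNReal.tendsto_ofReal (tendsto_one_div_add_atTop_nhds_zero_nat)
      simpa using this
    simpa using (tendsto_const_nhds (x := valE M l x)).add h0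
  have hchain : cost M l x γ ≤ valE M l x := by
    calc cost M l x γ
        = ∫⁻ s, Set.indicator {s : ℝ | 0 < s ∧ ENNReal.ofReal s < hitTime M x γ}
            (fun s => ENNReal.ofReal (l (z s))) s := by
          rw [cost, htraj, lintegral_indicator (measA _)]
      _ ≤ ∫⁻ s, liminf (fun k => F k s) atTop := lintegral_mono step1
      _ ≤ liminf (fun k => ∫⁻ s, F k s) atTop := lintegral_liminf_le hFmeas
      _ = liminf (fun k => cost M l x (β (φ k))) atTop := by
          simp only [hcost_eq]
      _ ≤ liminf (fun k : ℕ => valE M l x + ENNReal.ofReal (1/((k:ℝ)+1))) atTop :=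
          liminf_le_liminf (Eventually.of_forall fun k =>
            le_trans (hβc (φ k)).le (add_le_add le_rfl (hofReal_mono k)))
      _ = valE M l x := htendV.liminf_eq
  exact ⟨γ, hγadm, le_antisymm hchain (iInf₂_le γ hγadm)⟩
end

section
/- Under assumption (F), let α* be an optimal control for x with trajectory y* (extended with ℓ(y*(s)) = 0 for s ≥ t_x(α*), i.e. the trajectory stays in 𝔐 after the hitting time). Then for every δ > 0 and every t > 0 the fraction of time spent outside the set K_δ := {z : ℓ(z) ≤ δ} satisfies ρ^δ(t) := (1/t)·Leb{s ∈ [0,t] : ℓ(y*(s)) > δ} ≤ ℓ̄ · dist(x,𝔐) / (t δ); in particular ρ^δ(t) → 0 as t → +∞. -/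
open MeasureTheory Filter Metric Set Topology
open scoped ENNReal

section Aux

variable {n : ℕ}

lemma intOn {α : ℝ → Euc n} (hα : Admissible α) {a b : ℝ} (ha : 0 ≤ a) :
    IntegrableOn α (Set.Ioc a b) volume := by
  apply Integrable.mono' (g := fun _ => (1 : ℝ)) (integrable_const 1)
    hα.1.aestronglyMeasurable.restrict
  filter_upwards [ae_restrict_of_ae hα.2, ae_restrict_mem measurableSet_Ioc] with s hs hmem
  exact hs (ha.trans hmem.1.le)

lemma traj_eq_max (x : Euc n) (α : ℝ → Euc n) (t : ℝ) :
    traj x α t = traj x α (max t 0) := by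
  rcases le_total t 0 with h | h
  · simp [traj, Set.Ioc_eq_empty (by simpa using h : ¬ (0:ℝ) < t), max_eq_right h]
  · rw [max_eq_left h]

lemma traj_cont {α : ℝ → Euc n} (hα : Admissible α) (x : Euc n) :
    Continuous (traj x α) := by
  have key : ∀ a b : ℝ, 0 ≤ a → a ≤ b → dist (traj x α b) (traj x α a) ≤ b - a := by
    intro a b ha hab
    have hsplit : (∫ s in Set.Ioc (0:ℝ) b, α s) =
        (∫ s in Set.Ioc (0:ℝ) a, α s) + ∫ s in Set.Ioc a b, α s := by
      rw [← Set.Ioc_union_Ioc_eq_Ioc ha hab,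
        setIntegral_union (Set.Ioc_disjoint_Ioc_of_le le_rfl) measurableSet_Ioc
          (intOn hα le_rfl) (intOn hα ha)]
    have hnorm : ‖∫ s in Set.Ioc a b, α s‖ ≤ 1 * (volume (Set.Ioc a b)).toReal := by
      apply norm_setIntegral_le_of_norm_le_const_ae' measure_Ioc_lt_top _
      filter_upwards [hα.2] with s hs hmem
      exact hs (ha.trans hmem.1.le)
    simp only [traj, dist_eq_norm]
    rw [hsplit]
    have : x + ((∫ s in Set.Ioc (0:ℝ) a, α s) + ∫ s in Set.Ioc a b, α s)
        - (x + ∫ s in Set.Ioc (0:ℝ) a, α s) = ∫ s in Set.Ioc a b, α s := by abel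
    rw [this]
    calc ‖∫ s in Set.Ioc a b, α s‖ ≤ 1 * (volume (Set.Ioc a b)).toReal := hnorm
      _ ≤ b - a := by
        rw [Real.volume_Ioc, one_mul]
        rw [ENNReal.toReal_ofReal (by linarith)]
  have hlip : LipschitzOnWith 1 (traj x α) (Set.Ici 0) := by
    rw [lipschitzOnWith_iff_dist_le_mul]
    intro a ha b hb
    rcases le_total a b with h | h
    · rw [dist_comm]
      calc dist (traj x α b) (traj x α a) ≤ b - a := key a b ha h
        _ ≤ 1 * dist a b := by rw [one_mul, Real.dist_eq, abs_sub_comm]; exact le_abs_self _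
    · calc dist (traj x α a) (traj x α b) ≤ a - b := key b a hb h
        _ ≤ 1 * dist a b := by rw [one_mul, Real.dist_eq]; exact le_abs_self _
  have : Continuous fun t => traj x α (max t 0) :=
    hlip.continuousOn.comp_continuous (continuous_id.max continuous_const)
      (fun t => le_max_right t 0)
  simpa [← traj_eq_max] using this

end Aux

/-- under assumption (F), along an optimal trajectory (extended to stay in
`M` after the hitting time) the fraction of time spent where `l > δ` satisfies
`ρ^δ(t) ≤ ℓ̄ · dist(x,M) / (t δ)`; in particular `ρ^δ(t) → 0` as `t → +∞`. -/
theorem stmt11 {n : ℕ} (M : Set (Euc n)) (l : Euc n → ℝ)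
    (hMne : M.Nonempty) (hMcl : IsClosed M)
    (hlc : Continuous l) (hlbd : BddAbove (Set.range l))
    (hlpos : ∀ z ∉ M, 0 < l z) (hlzero : ∀ z ∈ M, l z = 0)
    (x : Euc n) (α : ℝ → Euc n) (hopt : IsOptimal M l x α) :
    (∀ δ : ℝ, 0 < δ → ∀ t : ℝ, 0 < t →
      (volume {s : ℝ | s ∈ Set.Icc 0 t ∧ ENNReal.ofReal s < hitTime M x α ∧
          δ < l (traj x α s)}).toReal / t
        ≤ sSup (Set.range l) * Metric.infDist x M / (t * δ)) ∧
    (∀ δ : ℝ, 0 < δ →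
      Tendsto (fun t : ℝ =>
        (volume {s : ℝ | s ∈ Set.Icc 0 t ∧ ENNReal.ofReal s < hitTime M x α ∧
          δ < l (traj x α s)}).toReal / t) atTop (𝓝 0)) := by
    classical
  obtain ⟨hadm, hco⟩ := hopt
  set d := Metric.infDist x M with hd
  have hd0 : 0 ≤ d := Metric.infDist_nonneg
  obtain ⟨z, hzM, hdz⟩ := hMcl.exists_infDist_eq_dist hMne x
  set L := sSup (Set.range l) with hL
  have hlle : ∀ w, l w ≤ L := fun w => le_csSup hlbd (Set.mem_range_self w)
  have hL0 : 0 ≤ L := by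
    obtain ⟨z0, hz0⟩ := hMne
    have := hlle z0
    rw [hlzero z0 hz0] at this
    exact this
  -- the straight-line control
  set c : Euc n := if d = 0 then 0 else d⁻¹ • (z - x) with hc
  set β : ℝ → Euc n := fun _ => c with hβ
  have hβadm : Admissible β := by
    refine ⟨measurable_const, Filter.Eventually.of_forall fun s _ => ?_⟩
    by_cases hdd : d = 0
    · simp [hβ, hc, hdd]
    · have hdpos : 0 < d := lt_of_le_of_ne hd0 (Ne.symm hdd)
      have : ‖c‖ = 1 := by
        rw [hc, if_neg hdd, norm_smul, norm_inv, Real.norm_of_nonneg hd0]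
        have : ‖z - x‖ = d := by
          rw [hd, hdz, dist_eq_norm, norm_sub_rev]
        rw [this, inv_mul_cancel₀ hdd]
      simp [hβ, this]
  have htraj : ∀ s : ℝ, 0 ≤ s → traj x β s = x + s • c := by
    intro s hs
    simp only [traj, hβ]
    rw [setIntegral_const, Real.volume_real_Ioc, sub_zero, max_eq_left hs]
  have hmemd : traj x β d ∈ M := by
    by_cases hdd : d = 0
    · rw [htraj d hd0, hdd, zero_smul, add_zero]
      have : dist x z = 0 := by rw [← hdz, ← hd]; exact hdd
      rw [dist_eq_zero] at this
      rw [this]; exact hzM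
    · rw [htraj d hd0, hc, if_neg hdd, smul_smul, mul_inv_cancel₀ hdd, one_smul]
      have : x + (z - x) = z := by abel
      rw [this]; exact hzM
  have hhit : hitTime M x β ≤ ENNReal.ofReal d :=
    iInf_le_of_le d (iInf_le_of_le hd0 (iInf_le_of_le hmemd le_rfl))
  have hcostβ : cost M l x β ≤ ENNReal.ofReal (L * d) := by
    have hsub : {s : ℝ | 0 < s ∧ ENNReal.ofReal s < hitTime M x β} ⊆ Set.Ioc 0 d := by
      rintro s ⟨hs0, hs1⟩
      have : ENNReal.ofReal s < ENNReal.ofReal d := hs1.trans_le hhit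
      exact ⟨hs0, ((ENNReal.ofReal_lt_ofReal_iff_of_nonneg hs0.le).mp this).le⟩
    calc cost M l x β ≤ ∫⁻ s in Set.Ioc (0:ℝ) d, ENNReal.ofReal (l (traj x β s)) :=
          lintegral_mono_set hsub
      _ ≤ ∫⁻ _ in Set.Ioc (0:ℝ) d, ENNReal.ofReal L :=
          setLIntegral_mono measurable_const
            (fun s _ => ENNReal.ofReal_le_ofReal (hlle _))
      _ = ENNReal.ofReal L * volume (Set.Ioc (0:ℝ) d) := setLIntegral_const _ _
      _ = ENNReal.ofReal (L * d) := by
          rw [Real.volume_Ioc, sub_zero, ← ENNReal.ofReal_mul hL0]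
  have hvle : cost M l x α ≤ ENNReal.ofReal (L * d) := by
    rw [hco]
    exact le_trans (iInf₂_le β hβadm) hcostβ
  -- main quantitative bound
  have main : ∀ δ : ℝ, 0 < δ → ∀ t : ℝ, 0 < t →
      (volume {s : ℝ | s ∈ Set.Icc 0 t ∧ ENNReal.ofReal s < hitTime M x α ∧
          δ < l (traj x α s)}).toReal / t ≤ L * d / (t * δ) := by
    intro δ hδ t ht
    set A := {s : ℝ | s ∈ Set.Icc 0 t ∧ ENNReal.ofReal s < hitTime M x α ∧
        δ < l (traj x α s)} with hA
    set A' := A ∩ Set.Ioi (0:ℝ) with hA'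
    have hAsub : A ⊆ A' ∪ {0} := by
      intro s hs
      rcases eq_or_lt_of_le hs.1.1 with h | h
      · exact Or.inr (by simp [← h])
      · exact Or.inl ⟨hs, h⟩
    have hvolA : volume A ≤ volume A' := by
      calc volume A ≤ volume (A' ∪ {0}) := measure_mono hAsub
        _ ≤ volume A' + volume {0} := measure_union_le _ _
        _ = volume A' := by simp
    have hlow : ENNReal.ofReal δ * volume A' ≤ cost M l x α := by
      have hA'S : A' ⊆ {s : ℝ | 0 < s ∧ ENNReal.ofReal s < hitTime M x α} :=
        fun s hs => ⟨hs.2, hs.1.2.1⟩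
      calc ENNReal.ofReal δ * volume A' = ∫⁻ _ in A', ENNReal.ofReal δ :=
            (setLIntegral_const _ _).symm
        _ ≤ ∫⁻ s in A', ENNReal.ofReal (l (traj x α s)) :=
            setLIntegral_mono
              (ENNReal.measurable_ofReal.comp (hlc.comp (traj_cont hadm x)).measurable)
              (fun s hs => ENNReal.ofReal_le_ofReal hs.1.2.2.le)
        _ ≤ cost M l x α := lintegral_mono_set hA'S
    have hcomb : ENNReal.ofReal δ * volume A ≤ ENNReal.ofReal (L * d) :=
      le_trans (mul_le_mul_right hvolA _) (hlow.trans hvle)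
    have h1 : δ * (volume A).toReal ≤ L * d := by
      have := ENNReal.toReal_mono ENNReal.ofReal_ne_top hcomb
      rwa [ENNReal.toReal_mul, ENNReal.toReal_ofReal hδ.le,
        ENNReal.toReal_ofReal (mul_nonneg hL0 hd0)] at this
    rw [div_le_div_iff₀ ht (mul_pos ht hδ)]
    nlinarith [mul_le_mul_of_nonneg_left h1 ht.le]
  refine ⟨main, fun δ hδ => ?_⟩
  apply squeeze_zero' (g := fun t => L * d / (t * δ))
  · filter_upwards [eventually_gt_atTop (0:ℝ)] with t ht
    positivity
  · filter_upwards [eventually_gt_atTop (0:ℝ)] with t ht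
    exact main δ hδ t ht
  · exact tendsto_const_nhds.div_atTop (tendsto_id.atTop_mul_const hδ)
end
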